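/- arXiv:2502.00269 — 6 statements merged into one kernel-verified Lean document; each statement's English description precedes it below -/
import Mathlib

section
/- For every real c with 0 < c < 1, the series Σ_{s=0}^{∞} ((c·e^{-c})^{s}/s!)·(s+1)^{s} converges and its sum equals e^{c}/(1−c). -/
open Finset fwdDiff

lemma fwdDiff_pow_eq : ∀ (m : ℕ), ∀ i : ℕ, i ≤ m → ∀ x : ℝ,
    (fwdDiff (1:ℝ))^[m] (fun t : ℝ => t ^ i) x = if i = m then (m.factorial : ℝ) else 0 := by
  intro m
  induction m with
  | zero =>
      intro i hi x
      interval_cases i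
      simp
  | succ m ih =>
      intro i hi x
      have hΔ : fwdDiff (1:ℝ) (fun t : ℝ => t ^ i)
          = ∑ j ∈ range i, (i.choose j) • (fun t : ℝ => t ^ j) := by
        funext t
        simp only [fwdDiff, Finset.sum_apply, Pi.smul_apply, smul_eq_mul, nsmul_eq_mul]
        have h := add_pow t (1:ℝ) i
        simp only [one_pow, mul_one] at h
        rw [h, Finset.sum_range_succ]
        simp [mul_comm]
      rw [Function.iterate_succ_apply, hΔ]
      rw [fwdDiff_iter_finset_sum]
      simp only [fwdDiff_iter_const_smul]
      rw [Finset.sum_apply]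
      simp only [Pi.smul_apply, smul_eq_mul, nsmul_eq_mul]
      have hval : ∀ j ∈ range i, (i.choose j : ℝ) * ((fwdDiff (1:ℝ))^[m] (fun t : ℝ => t ^ j) x)
          = if j = m then (i.choose j : ℝ) * m.factorial else 0 := by
        intro j hj
        have hj' : j < i := Finset.mem_range.mp hj
        rw [ih j (by omega) x]
        split <;> simp
      rw [Finset.sum_congr rfl hval, Finset.sum_ite_eq' (range i) m
        (fun j => (i.choose j : ℝ) * m.factorial)]
      rcases Nat.lt_or_ge i (m+1) with h | h
      · have h1 : m ∉ range i := by simp; omega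
        have h2 : i ≠ m + 1 := by omega
        simp [h1, h2]
      · have hi' : i = m + 1 := by omega
        subst hi'
        have h1 : m ∈ range (m+1) := by simp
        simp [h1, Nat.factorial_succ]

lemma alt_sum_pow (m : ℕ) (x : ℝ) :
    ∑ k ∈ range (m + 1), (-1 : ℝ) ^ (m - k) * (m.choose k) * (x + k) ^ m
      = (m.factorial : ℝ) := by
  have h := fwdDiff_iter_eq_sum_shift (1 : ℝ) (fun t : ℝ => t ^ m) m x
  rw [fwdDiff_pow_eq m m le_rfl x, if_pos rfl] at h
  rw [h]
  apply Finset.sum_congr rfl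
  intro k hk
  have : x + k • (1:ℝ) = x + k := by simp
  rw [this, zsmul_eq_mul]
  push_cast
  ring
lemma abel_identity (n : ℕ) : ∀ x y : ℝ,
    ∑ k ∈ range (n + 1), (n.choose k : ℝ) * (x + k) ^ k * (y - k) ^ (n - k)
      = ∑ j ∈ range (n + 1), ((n.factorial : ℝ) / j.factorial) * (x + y) ^ j := by
  induction n with
  | zero => intro x y; simp
  | succ n ih =>
    intro x y
    have hF : ∀ z : ℝ, HasDerivAt
        (fun w : ℝ => ∑ k ∈ range (n+1+1), ((n+1).choose k : ℝ) * (x + k) ^ k * (w - k) ^ (n+1-k))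
        (((n:ℝ)+1) * ∑ k ∈ range (n+1), (n.choose k : ℝ) * (x + k) ^ k * (z - k) ^ (n-k)) z := by
      intro z
      have h1 : HasDerivAt
          (fun w : ℝ => ∑ k ∈ range (n+1+1), ((n+1).choose k : ℝ) * (x + k) ^ k * (w - k) ^ (n+1-k))
          (∑ k ∈ range (n+1+1), ((n+1).choose k : ℝ) * (x + k) ^ k *
            (((n+1-k : ℕ) : ℝ) * (z - k) ^ (n+1-k-1))) z := by
        apply HasDerivAt.fun_sum
        intro k _
        have h2 : HasDerivAt (fun w : ℝ => (w - (k:ℝ)) ^ (n+1-k))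
            (((n+1-k : ℕ) : ℝ) * (z - k) ^ (n+1-k-1)) z := by
          have := ((hasDerivAt_id z).sub_const (k:ℝ)).fun_pow (n+1-k)
          simpa using this
        exact h2.const_mul (((n+1).choose k : ℝ) * (x + k) ^ k)
      have hsum : (∑ k ∈ range (n+1+1), ((n+1).choose k : ℝ) * (x + k) ^ k *
            (((n+1-k : ℕ) : ℝ) * (z - k) ^ (n+1-k-1)))
          = ((n:ℝ)+1) * ∑ k ∈ range (n+1), (n.choose k : ℝ) * (x + k) ^ k * (z - k) ^ (n-k) := by
        rw [Finset.sum_range_succ]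
        rw [show (n+1) - (n+1) = 0 from by omega]
        simp only [Nat.cast_zero, zero_mul, mul_zero, add_zero]
        rw [Finset.mul_sum]
        apply Finset.sum_congr rfl
        intro k hk
        have hk' : k ≤ n := by simpa [Nat.lt_succ_iff] using hk
        have hnat : (n+1) * n.choose k = (n+1).choose k * (n+1-k) := by
          have h1 := Nat.add_one_mul_choose_eq n k
          have h2 := Nat.choose_succ_right_eq (n+1) k
          omega
        have hcast := congrArg (fun t : ℕ => (t : ℝ)) hnat
        push_cast [Nat.cast_sub (by omega : k ≤ n+1)] at hcast
        rw [show n+1-k-1 = n-k from by omega]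
        have hsub : ((n+1-k : ℕ) : ℝ) = (n:ℝ) + 1 - k := by
          push_cast [Nat.cast_sub (by omega : k ≤ n+1)]; ring
        rw [hsub]
        linear_combination (-(x+(k:ℝ))^k * (z-(k:ℝ))^(n-k)) * hcast
      rw [hsum] at h1
      exact h1
    have hG : ∀ z : ℝ, HasDerivAt
        (fun w : ℝ => ∑ j ∈ range (n+1+1), (((n+1).factorial : ℝ) / j.factorial) * (x + w) ^ j)
        (((n:ℝ)+1) * ∑ j ∈ range (n+1), ((n.factorial : ℝ) / j.factorial) * (x + z) ^ j) z := by
      intro z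
      have h1 : HasDerivAt
          (fun w : ℝ => ∑ j ∈ range (n+1+1), (((n+1).factorial : ℝ) / j.factorial) * (x + w) ^ j)
          (∑ j ∈ range (n+1+1), (((n+1).factorial : ℝ) / j.factorial) *
            ((j:ℝ) * (x + z) ^ (j-1))) z := by
        apply HasDerivAt.fun_sum
        intro j _
        have h2 : HasDerivAt (fun w : ℝ => (x + w) ^ j) ((j:ℝ) * (x + z) ^ (j-1)) z := by
          have := ((hasDerivAt_id z).const_add x).fun_pow j
          simpa using this
        exact h2.const_mul (((n+1).factorial : ℝ) / j.factorial)
      have hsum2 : (∑ j ∈ range (n+1+1), (((n+1).factorial : ℝ) / j.factorial) *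
            ((j:ℝ) * (x + z) ^ (j-1)))
          = ((n:ℝ)+1) * ∑ j ∈ range (n+1), ((n.factorial : ℝ) / j.factorial) * (x + z) ^ j := by
        rw [Finset.sum_range_succ']
        simp only [Nat.cast_zero, zero_mul, mul_zero, add_zero]
        rw [Finset.mul_sum]
        apply Finset.sum_congr rfl
        intro i _
        have hfi : ((i.factorial : ℝ)) ≠ 0 := by
          exact_mod_cast (Nat.factorial_pos i).ne'
        have hi1 : ((i:ℝ) + 1) ≠ 0 := by positivity
        rw [Nat.factorial_succ (n), Nat.factorial_succ i]
        push_cast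
        field_simp
      rw [hsum2] at h1
      exact h1
    -- the difference is constant
    have hφ : ∀ z : ℝ, HasDerivAt
        (fun w : ℝ => (∑ k ∈ range (n+1+1), ((n+1).choose k : ℝ) * (x + k) ^ k * (w - k) ^ (n+1-k))
          - ∑ j ∈ range (n+1+1), (((n+1).factorial : ℝ) / j.factorial) * (x + w) ^ j) 0 z := by
      intro z
      have := (hF z).sub (hG z)
      rwa [ih x z, sub_self] at this
    have hconst := is_const_of_deriv_eq_zero (𝕜 := ℝ)
      (f := fun w : ℝ => (∑ k ∈ range (n+1+1), ((n+1).choose k : ℝ) * (x + k) ^ k * (w - k) ^ (n+1-k))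
          - ∑ j ∈ range (n+1+1), (((n+1).factorial : ℝ) / j.factorial) * (x + w) ^ j)
      (fun z => (hφ z).differentiableAt) (fun z => (hφ z).deriv) y (-x)
    -- value at y = -x is zero
    have hFval : (∑ k ∈ range (n+1+1), ((n+1).choose k : ℝ) * (x + k) ^ k * ((-x) - k) ^ (n+1-k))
        = ((n+1).factorial : ℝ) := by
      rw [← alt_sum_pow (n+1) x]
      apply Finset.sum_congr rfl
      intro k hk
      have hk' : k ≤ n + 1 := by simpa [Nat.lt_succ_iff] using hk
      have h1 : ((-x) - (k:ℝ)) = -(x + k) := by ring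
      rw [h1, neg_pow]
      have h2 : (x+(k:ℝ))^k * (x+(k:ℝ))^(n+1-k) = (x+(k:ℝ))^(n+1) := by
        rw [← pow_add]
        congr 1
        omega
      linear_combination ((-1:ℝ)^(n+1-k) * (((n+1).choose k : ℝ))) * h2
    have hGval : (∑ j ∈ range (n+1+1), (((n+1).factorial : ℝ) / j.factorial) * (x + (-x)) ^ j)
        = ((n+1).factorial : ℝ) := by
      rw [show x + (-x) = 0 from by ring]
      rw [Finset.sum_eq_single_of_mem 0 (Finset.mem_range.mpr (by omega))
        (fun b _ hb => by simp [zero_pow hb])]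
      simp
    rw [hFval, hGval, sub_self] at hconst
    exact sub_eq_zero.mp hconst
lemma pow_succ_le_factorial_mul_exp (n : ℕ) :
    ((n:ℝ)+1)^n ≤ n.factorial * Real.exp 1 ^ (n+1) := by
  induction n with
  | zero => simpa using Real.one_le_exp (by norm_num)
  | succ n ih =>
    have hpos : (0:ℝ) < (n:ℝ)+1 := by positivity
    have h1 : ((n:ℝ)+1+1) ≤ ((n:ℝ)+1) * Real.exp (1/((n:ℝ)+1)) := by
      have h := Real.add_one_le_exp (1/((n:ℝ)+1))
      have h2 : ((n:ℝ)+1) * (1/((n:ℝ)+1) + 1) ≤ ((n:ℝ)+1) * Real.exp (1/((n:ℝ)+1)) :=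
        mul_le_mul_of_nonneg_left h (by positivity)
      calc ((n:ℝ)+1+1) = ((n:ℝ)+1) * (1/((n:ℝ)+1) + 1) := by field_simp; ring
        _ ≤ _ := h2
    have h2 : ((n:ℝ)+1+1)^(n+1) ≤ (((n:ℝ)+1) * Real.exp (1/((n:ℝ)+1)))^(n+1) :=
      pow_le_pow_left₀ (by positivity) h1 (n+1)
    have h3 : (Real.exp (1/((n:ℝ)+1)))^(n+1) = Real.exp 1 := by
      rw [← Real.exp_nat_mul]
      congr 1
      push_cast
      field_simp
    have h4 : (((n:ℝ)+1) * Real.exp (1/((n:ℝ)+1)))^(n+1)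
        = ((n:ℝ)+1) * ((n:ℝ)+1)^n * Real.exp 1 := by
      rw [mul_pow, h3, pow_succ]
      ring
    have h5 : ((n:ℝ)+1) * ((n:ℝ)+1)^n * Real.exp 1
        ≤ ((n:ℝ)+1) * (n.factorial * Real.exp 1 ^ (n+1)) * Real.exp 1 := by
      have := mul_le_mul_of_nonneg_right (mul_le_mul_of_nonneg_left ih (le_of_lt hpos))
        (le_of_lt (Real.exp_pos 1))
      linarith
    have h6 : ((n:ℝ)+1) * (n.factorial * Real.exp 1 ^ (n+1)) * Real.exp 1
        = (n+1).factorial * Real.exp 1 ^ (n+1+1) := by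
      rw [Nat.factorial_succ]
      push_cast
      ring
    push_cast
    calc ((n:ℝ)+1+1)^(n+1) ≤ _ := h2
      _ = _ := h4
      _ ≤ _ := h5
      _ = _ := h6

lemma summable_coeff {r : ℝ} (h0 : 0 ≤ r) (h : r * Real.exp 1 < 1) :
    Summable (fun n : ℕ => ((n:ℝ)+1)^n / n.factorial * r^n) := by
  have hgeo : Summable (fun n : ℕ => Real.exp 1 * (r * Real.exp 1)^n) :=
    (summable_geometric_of_lt_one (by positivity) h).mul_left _
  apply Summable.of_nonneg_of_le (fun n => by positivity) (fun n => ?_) hgeo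
  have hf : (0:ℝ) < n.factorial := by exact_mod_cast n.factorial_pos
  rw [div_mul_eq_mul_div, div_le_iff₀ hf]
  calc ((n:ℝ)+1)^n * r^n ≤ (n.factorial * Real.exp 1^(n+1)) * r^n :=
        mul_le_mul_of_nonneg_right (pow_succ_le_factorial_mul_exp n) (by positivity)
    _ = Real.exp 1 * (r*Real.exp 1)^n * n.factorial := by rw [mul_pow]; ring

lemma coeff_identity (c : ℝ) (n : ℕ) :
    ∑ p ∈ Finset.HasAntidiagonal.antidiagonal n,
        ((((p.1:ℝ))+1)^p.1 / p.1.factorial * c^p.1) * ((-(c * p.1))^p.2 / p.2.factorial)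
      = ∑ p ∈ Finset.HasAntidiagonal.antidiagonal n, (c^p.1 / p.1.factorial) * c^p.2 := by
  rw [Finset.Nat.sum_antidiagonal_eq_sum_range_succ_mk,
    Finset.Nat.sum_antidiagonal_eq_sum_range_succ_mk]
  have H := abel_identity n 1 0
  have hfac : ((n.factorial : ℝ)) ≠ 0 := by exact_mod_cast (Nat.factorial_pos n).ne'
  calc ∑ k ∈ range (n+1), ((((k:ℝ))+1)^k / k.factorial * c^k) *
          ((-(c * k))^(n-k) / (n-k).factorial)
      = (c^n / n.factorial) *
          ∑ k ∈ range (n+1), (n.choose k : ℝ) * (1 + k) ^ k * ((0:ℝ) - k) ^ (n - k) := by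
        rw [Finset.mul_sum]
        apply Finset.sum_congr rfl
        intro k hk
        have hk' : k ≤ n := by simpa [Nat.lt_succ_iff] using hk
        have hc1 : ((k.factorial : ℝ)) ≠ 0 := by exact_mod_cast (Nat.factorial_pos k).ne'
        have hc2 : (((n-k).factorial : ℝ)) ≠ 0 := by exact_mod_cast (Nat.factorial_pos (n-k)).ne'
        have hchoose : (n.choose k : ℝ) = (n.factorial : ℝ) / (k.factorial * (n-k).factorial) :=
          Nat.cast_choose ℝ hk'
        have hpow : (-(c * (k:ℝ)))^(n-k) = ((0:ℝ) - k)^(n-k) * c^(n-k) := by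
          rw [show -(c * (k:ℝ)) = ((0:ℝ) - k) * c from by ring, mul_pow]
        have hcn : c^k * c^(n-k) = c^n := by
          rw [← pow_add]
          congr 1
          omega
        rw [hpow, hchoose, ← hcn]
        field_simp
        ring
    _ = (c^n / n.factorial) * ∑ j ∈ range (n+1), ((n.factorial : ℝ) / j.factorial) * (1 + 0)^j := by
        rw [H]
    _ = ∑ k ∈ range (n+1), (c^k / k.factorial) * c^(n-k) := by
        rw [Finset.mul_sum]
        apply Finset.sum_congr rfl
        intro j hj
        have hj' : j ≤ n := by simpa [Nat.lt_succ_iff] using hj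
        have hc1 : ((j.factorial : ℝ)) ≠ 0 := by exact_mod_cast (Nat.factorial_pos j).ne'
        have hcn : c^j * c^(n-j) = c^n := by
          rw [← pow_add]; congr 1; omega
        rw [show ((1:ℝ)+0)^j = 1 from by norm_num, ← hcn]
        field_simp
lemma hasSum_exp_div (x : ℝ) : HasSum (fun m : ℕ => x^m / m.factorial) (Real.exp x) := by
  rw [Real.exp_eq_exp_ℝ]
  exact NormedSpace.expSeries_div_hasSum_exp x

lemma sum_small (c : ℝ) (h0 : 0 < c) (h1 : c < 1/4) :
    HasSum (fun n : ℕ => ((n:ℝ)+1)^n / n.factorial * (c * Real.exp (-c))^n)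
      (Real.exp c / (1-c)) := by
  set f : ℕ × ℕ → ℝ := fun p =>
    (((p.1:ℝ)+1)^p.1 / p.1.factorial * c^p.1) * ((-(c * p.1))^p.2 / p.2.factorial) with hf
  have hrow : ∀ s : ℕ, HasSum (fun m => f (s,m))
      (((s:ℝ)+1)^s / s.factorial * c^s * Real.exp (-(c*s))) :=
    fun s => (hasSum_exp_div (-(c*s))).mul_left _
  have habs_row : ∀ s : ℕ, HasSum (fun m => |f (s,m)|)
      (((s:ℝ)+1)^s / s.factorial * c^s * Real.exp (c*s)) := by
    intro s
    have h := (hasSum_exp_div (c*s)).mul_left (((s:ℝ)+1)^s / s.factorial * c^s)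
    refine h.congr_fun fun m => ?_
    have e0 : (0:ℝ) ≤ ((s:ℝ)+1)^s / s.factorial * c^s := by positivity
    have e1 : |(-(c * (s:ℝ)))^m| = (c*(s:ℝ))^m := by
      rw [abs_pow, abs_neg, abs_of_nonneg (by positivity : (0:ℝ) ≤ c * (s:ℝ))]
    have h1 : |f (s,m)| = (((s:ℝ)+1)^s / s.factorial * c^s) * ((c*(s:ℝ))^m / m.factorial) :=
      calc |f (s,m)|
          = |((s:ℝ)+1)^s / s.factorial * c^s| * (|(-(c * (s:ℝ)))^m| / |((m.factorial:ℕ):ℝ)|) := by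
            rw [hf, abs_mul, abs_div]
        _ = (((s:ℝ)+1)^s / s.factorial * c^s) * ((c*(s:ℝ))^m / m.factorial) := by
            rw [e1, abs_of_nonneg e0,
              abs_of_nonneg (by positivity : (0:ℝ) ≤ ((m.factorial:ℕ):ℝ))]
    rw [h1]
  -- bound c * exp c * exp 1 < 1
  have hA : (3/4 : ℝ) < Real.exp (-(1/4)) := by
    have h := Real.add_one_lt_exp (show (-(1/4):ℝ) ≠ 0 by norm_num)
    linarith
  have hB : Real.exp (1/4) < 4/3 := by
    have hpos : (0:ℝ) < Real.exp (-(1/4)) := Real.exp_pos _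
    have hinv : Real.exp (1/4) * Real.exp (-(1/4)) = 1 := by
      rw [← Real.exp_add]; norm_num
    nlinarith
  have hC : Real.exp 1 < 3 := by
    have := Real.exp_one_lt_d9
    linarith
  have hbound : c * Real.exp c * Real.exp 1 < 1 := by
    have h2 : Real.exp c < 4/3 := lt_trans (Real.exp_lt_exp.mpr (by linarith)) hB
    have p1 : c * Real.exp c < 1/3 := by nlinarith [Real.exp_pos c]
    have p2 : (0:ℝ) < c * Real.exp c := by positivity
    nlinarith [Real.exp_pos 1]
  have habs : Summable (fun p : ℕ × ℕ => |f p|) := by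
    apply (summable_prod_of_nonneg (fun p => abs_nonneg _)).mpr
    refine ⟨fun s => (habs_row s).summable, ?_⟩
    have heq : (fun s : ℕ => ∑' m, |f (s,m)|)
        = fun s : ℕ => ((s:ℝ)+1)^s / s.factorial * (c * Real.exp c)^s := by
      funext s
      rw [(habs_row s).tsum_eq, mul_pow, ← Real.exp_nat_mul, mul_assoc]
      congr 2
      ring
    rw [heq]
    exact summable_coeff (by positivity) hbound
  have hsummable : Summable f := summable_abs_iff.mp habs
  have hT := hsummable.hasSum
  have h1 : HasSum (fun s : ℕ => ((s:ℝ)+1)^s / s.factorial * c^s * Real.exp (-(c*s)))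
      (∑' p, f p) := hT.prod_fiberwise hrow
  have h2 : HasSum (f ∘ (Finset.HasAntidiagonal.sigmaAntidiagonalEquivProd (A := ℕ)))
      (∑' p, f p) := (Equiv.hasSum_iff _).mpr hT
  have h3 : HasSum (fun n : ℕ => ∑ p ∈ Finset.HasAntidiagonal.antidiagonal n, f p) (∑' p, f p) := by
    apply h2.sigma
    intro n
    have := hasSum_fintype (fun p : (Finset.HasAntidiagonal.antidiagonal n : Finset (ℕ × ℕ)) => f p)
    rwa [Finset.sum_coe_sort (Finset.HasAntidiagonal.antidiagonal n) f] at this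
  have h4 : HasSum (fun n : ℕ => ∑ p ∈ Finset.HasAntidiagonal.antidiagonal n, (c^p.1 / p.1.factorial) * c^p.2)
      (∑' p, f p) := by
    refine h3.congr_fun fun n => ?_
    exact (coeff_identity c n).symm
  -- Cauchy product
  have hexp : HasSum (fun j : ℕ => c^j / j.factorial) (Real.exp c) := hasSum_exp_div c
  have hgeo : HasSum (fun k : ℕ => c^k) ((1-c)⁻¹) :=
    hasSum_geometric_of_lt_one h0.le (by linarith)
  have hfn : Summable (fun j : ℕ => ‖c^j / (j.factorial : ℝ)‖) := by
    refine (Real.summable_pow_div_factorial |c|).congr fun j => ?_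
    rw [norm_div, norm_pow, Real.norm_eq_abs, Real.norm_eq_abs, Nat.abs_cast]
  have hgn : Summable (fun k : ℕ => ‖(c^k : ℝ)‖) := by
    refine (summable_geometric_of_lt_one (abs_nonneg c) (by rw [abs_of_pos h0]; linarith)).congr
      fun k => ?_
    rw [norm_pow, Real.norm_eq_abs]
  have h5 := tsum_mul_tsum_eq_tsum_sum_antidiagonal_of_summable_norm hfn hgn
  rw [hexp.tsum_eq, hgeo.tsum_eq] at h5
  have h6 : (∑' p, f p) = Real.exp c / (1-c) := by
    rw [← h4.tsum_eq, ← h5, div_eq_mul_inv]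
  rw [h6] at h1
  refine h1.congr_fun fun n => ?_
  rw [mul_pow, ← Real.exp_nat_mul, mul_assoc]
  congr 2
  ring

noncomputable def pG : FormalMultilinearSeries ℝ ℝ ℝ :=
  FormalMultilinearSeries.ofScalars ℝ (fun n => ((n:ℝ)+1)^n / n.factorial)

lemma pG_radius_ge {r : NNReal} (h : (r:ℝ) * Real.exp 1 < 1) : (r : ENNReal) ≤ pG.radius := by
  apply FormalMultilinearSeries.le_radius_of_summable_norm
  refine (summable_coeff r.coe_nonneg h).congr fun n => ?_
  have hnn : (0:ℝ) ≤ ((n:ℝ)+1)^n / n.factorial := by positivity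
  rw [show ‖pG n‖ = ‖((n:ℝ)+1)^n / n.factorial‖ from
    FormalMultilinearSeries.ofScalars_norm _ _ _, Real.norm_eq_abs, abs_of_nonneg hnn]

lemma pG_mem {c : ℝ} (h0 : 0 < c) (h1 : c < 1) :
    c * Real.exp (-c) ∈ Metric.eball (0:ℝ) pG.radius := by
  have hlt : c * Real.exp (-c) * Real.exp 1 < 1 := by
    have hne : c - 1 ≠ 0 := by intro h; apply absurd h1; rw [show c = 1 by linarith]; simp
    have h := Real.add_one_lt_exp hne
    have h2 : c < Real.exp (c - 1) := by linarith
    have h3 : Real.exp (-c) * Real.exp 1 = Real.exp (1 - c) := by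
      rw [← Real.exp_add]; ring_nf
    have h4 : Real.exp (c - 1) * Real.exp (1 - c) = 1 := by
      rw [← Real.exp_add]; norm_num
    calc c * Real.exp (-c) * Real.exp 1 = c * Real.exp (1 - c) := by rw [mul_assoc, h3]
      _ < Real.exp (c - 1) * Real.exp (1 - c) :=
          mul_lt_mul_of_pos_right h2 (Real.exp_pos _)
      _ = 1 := h4
  set t := c * Real.exp (-c) with ht
  have ht0 : 0 < t := by positivity
  set u := (t + (Real.exp 1)⁻¹)/2 with hu
  have hiexp : 0 < (Real.exp 1)⁻¹ := by positivity
  have hu0 : 0 ≤ u := by positivity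
  have htinv : t < (Real.exp 1)⁻¹ := by
    rw [inv_eq_one_div, lt_div_iff₀ (Real.exp_pos 1)]
    exact hlt
  have htu : t < u := by rw [hu]; linarith
  have hue : (u : ℝ) * Real.exp 1 < 1 := by
    have : u < (Real.exp 1)⁻¹ := by rw [hu]; linarith
    calc u * Real.exp 1 < (Real.exp 1)⁻¹ * Real.exp 1 :=
        mul_lt_mul_of_pos_right this (Real.exp_pos 1)
      _ = 1 := inv_mul_cancel₀ (Real.exp_pos 1).ne'
  rw [Metric.mem_eball, edist_zero_right]
  have hru : ((u.toNNReal : NNReal) : ℝ) = u := Real.coe_toNNReal u hu0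
  have hlt2 : ‖t‖₊ < u.toNNReal := by
    rw [← NNReal.coe_lt_coe, hru, coe_nnnorm, Real.norm_eq_abs, abs_of_pos ht0]
    exact htu
  calc (‖t‖₊ : ENNReal) < (u.toNNReal : ENNReal) := by exact_mod_cast hlt2
    _ ≤ pG.radius := pG_radius_ge (by rw [hru]; exact hue)

lemma pG_sum_eq {c : ℝ} (h0 : 0 < c) (h1 : c < 1/4) :
    pG.sum (c * Real.exp (-c)) = Real.exp c / (1 - c) := by
  have hs := sum_small c h0 h1
  have e : pG.sum (c * Real.exp (-c))
      = ∑' n : ℕ, (((n:ℝ)+1)^n / n.factorial) • (c * Real.exp (-c))^n :=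
    FormalMultilinearSeries.ofScalars_sum_eq _ _
  simp only [smul_eq_mul] at e
  rw [e, hs.tsum_eq]

lemma pG_eqOn : Set.EqOn (fun c : ℝ => pG.sum (c * Real.exp (-c)))
    (fun c : ℝ => Real.exp c / (1 - c)) (Set.Ioo (0:ℝ) 1) := by
  have hradpos : (0:ENNReal) < pG.radius :=
    lt_of_le_of_lt zero_le (Metric.mem_eball.mp (pG_mem (c := 1/2) (by norm_num) (by norm_num)))
  have hball := pG.hasFPowerSeriesOnBall hradpos
  apply AnalyticOnNhd.eqOn_of_preconnected_of_eventuallyEq (𝕜 := ℝ) (z₀ := (1/8 : ℝ))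
  · intro x hx
    have hinner : AnalyticAt ℝ (fun c : ℝ => c * Real.exp (-c)) x :=
      analyticAt_id.mul (analyticAt_rexp.comp analyticAt_id.neg)
    have houter : AnalyticAt ℝ pG.sum (x * Real.exp (-x)) :=
      hball.analyticAt_of_mem (pG_mem hx.1 hx.2)
    have hcomp := AnalyticAt.comp (g := pG.sum)
      (f := fun c : ℝ => c * Real.exp (-c)) (x := x) houter hinner
    exact hcomp
  · intro x hx
    have h2 : AnalyticAt ℝ (fun c : ℝ => 1 - c) x := analyticAt_const.sub analyticAt_id
    refine analyticAt_rexp.div h2 ?_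
    intro hcon
    have h3 : (1:ℝ) = x := sub_eq_zero.mp hcon
    have h4 := hx.2
    linarith
  · exact isPreconnected_Ioo
  · constructor <;> norm_num
  · have hmem : Set.Ioo (0:ℝ) (1/4) ∈ nhds (1/8 : ℝ) := Ioo_mem_nhds (by norm_num) (by norm_num)
    filter_upwards [hmem] with x hx
    exact pG_sum_eq hx.1 hx.2

/-- For every real `c` with `0 < c < 1`, the series `Σ_{s=0}^∞ ((c·e^{-c})^s/s!)·(s+1)^s`
converges, with sum `e^c/(1−c)`. -/
theorem tree_function_G_value (c : ℝ) (hc : 0 < c) (hc1 : c < 1) :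
    HasSum (fun s : ℕ => (c * Real.exp (-c)) ^ s / (s.factorial : ℝ) * ((s : ℝ) + 1) ^ s)
      (Real.exp c / (1 - c)) := by
  have hz := pG_mem hc hc1
  have hsum := pG.hasSum hz
  have hval : pG.sum (c * Real.exp (-c)) = Real.exp c / (1 - c) := pG_eqOn ⟨hc, hc1⟩
  rw [hval] at hsum
  refine hsum.congr_fun fun n => ?_
  show _ = pG n fun _ => c * Real.exp (-c)
  rw [show pG n = FormalMultilinearSeries.ofScalars ℝ
    (fun n => ((n:ℝ)+1)^n / n.factorial) n from rfl,
    FormalMultilinearSeries.ofScalars_apply_eq]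
  rw [smul_eq_mul]
  ring
end

section
/- For all integers 1 ≤ m ≤ n and every real p ∈ [0,1], the values Q_{m,n,p}(j) sum to one: Σ_{j=1}^{n} Q_{m,n,p}(j) = 1. -/
/-- `T m n s = C(m-1,s)·(n-s)^(m-s-2)·(s+1)^(s-1)` in `ℝ`, with integer (possibly
negative) exponents interpreted via `zpow`. -/
noncomputable def T (m n s : ℕ) : ℝ :=
  ((m - 1).choose s : ℝ) * ((n : ℝ) - s) ^ ((m : ℤ) - s - 2) * ((s : ℝ) + 1) ^ ((s : ℤ) - 1)

/-- `Q m n p j` is the conditional probability that the last of `m` cars prefers spot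
`j ∈ {1,…,n}` given that all cars park, in the probabilistic parking model on `n` spots
with forward-probability `p` (Theorem 3 of Durmić–Han–Harris–Ribeiro–Yin):
`Q_{m,n,p}(j) = (n-m+2)/((n-m+1)(n+1)) − (1/(n+1)^(m-1))·
  [ p·Σ_{s=n-j+1}^{m-1} T(s) + (1-p)·Σ_{s=j}^{m-1} T(s) ]`. -/
noncomputable def Q (m n : ℕ) (p : ℝ) (j : ℕ) : ℝ :=
  ((n : ℝ) - m + 2) / (((n : ℝ) - m + 1) * ((n : ℝ) + 1)) -
    1 / ((n : ℝ) + 1) ^ (m - 1) *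
      (p * ∑ s ∈ Finset.Icc (n - j + 1) (m - 1), T m n s +
        (1 - p) * ∑ s ∈ Finset.Icc j (m - 1), T m n s)

/-- Total variation distance between `Q m n p` and the uniform distribution on `{1,…,n}`:
`(1/2)·Σ_{j=1}^n |Q_{m,n,p}(j) − 1/n|`. -/
noncomputable def tvUni (m n : ℕ) (p : ℝ) : ℝ :=
  1 / 2 * ∑ j ∈ Finset.Icc 1 n, |Q m n p j - 1 / (n : ℝ)|

section Aux
open Finset Polynomial

lemma fwdDiff_poly_eval (P : ℝ[X]) :
    fwdDiff (1:ℝ) (fun y => P.eval y) = fun y => (P.comp (X + C 1) - P).eval y := by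
  funext y
  simp [fwdDiff, eval_comp]

lemma degree_shift_sub (P : ℝ[X]) : (P.comp (X + C 1) - P).degree < P.degree ∨
    (P.comp (X + C 1) - P) = 0 := by
  rcases le_or_gt P.natDegree 0 with h | h
  · right
    rw [Polynomial.eq_C_of_natDegree_le_zero h]
    simp
  · left
    have hP : P ≠ 0 := fun h0 => by simp [h0] at h
    have hq : (X + C (1:ℝ)).natDegree = 1 := by
      simpa using Polynomial.natDegree_X_add_C (1:ℝ)
    have hdeg : (P.comp (X + C 1)).natDegree = P.natDegree := by
      rw [Polynomial.natDegree_comp, hq, mul_one]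
    have hlc : (P.comp (X + C 1)).leadingCoeff = P.leadingCoeff := by
      rw [Polynomial.leadingCoeff_comp (by rw [hq]; norm_num)]
      have : (X + C (1:ℝ)).leadingCoeff = 1 := by
        simpa using Polynomial.leadingCoeff_X_add_C (1:ℝ)
      rw [this, one_pow, mul_one]
    have hne : P.comp (X + C 1) ≠ 0 := by
      intro h0
      rw [h0] at hdeg
      simp at hdeg
      omega
    have hdd : (P.comp (X + C 1)).degree = P.degree := by
      rw [Polynomial.degree_eq_natDegree hne, Polynomial.degree_eq_natDegree hP, hdeg]
    have := Polynomial.degree_sub_lt hdd hne hlc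
    rwa [hdd] at this

lemma degree_lt_succ_le {P : ℝ[X]} {n : ℕ} (h : P.degree < ((n+1 : ℕ) : WithBot ℕ)) :
    P.degree ≤ (n : WithBot ℕ) := by
  rcases eq_or_ne P 0 with rfl | h0
  · simp
  · rw [Polynomial.degree_eq_natDegree h0] at h ⊢
    exact_mod_cast Nat.lt_succ_iff.mp (by exact_mod_cast h)

lemma fwdDiff_iter_poly_zero : ∀ (n : ℕ) (P : ℝ[X]), P.degree < (n : WithBot ℕ) →
    ∀ y : ℝ, (fwdDiff (1:ℝ))^[n] (fun z => P.eval z) y = 0 := by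
  intro n
  induction n with
  | zero =>
    intro P hP y
    have : P = 0 := Polynomial.degree_eq_bot.mp
      (Nat.WithBot.lt_zero_iff.mp (by exact_mod_cast hP))
    simp [this]
  | succ n ih =>
    intro P hP y
    rw [Function.iterate_succ_apply, fwdDiff_poly_eval]
    refine ih _ ?_ y
    rcases degree_shift_sub P with h | h
    · exact lt_of_lt_of_le h (degree_lt_succ_le hP)
    · rw [h]
      simp only [Polynomial.degree_zero]
      exact bot_lt_iff_ne_bot.mpr (by simp)

lemma fd (n : ℕ) (P : ℝ[X]) (hP : P.degree < (n : WithBot ℕ)) :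
    ∑ t ∈ range (n + 1), (-1:ℝ) ^ (n - t) * (n.choose t : ℝ) * P.eval (t : ℝ) = 0 := by
  have h := fwdDiff_iter_eq_sum_shift (1:ℝ) (fun z => P.eval z) n 0
  rw [fwdDiff_iter_poly_zero n P hP 0] at h
  have h2 : ∑ t ∈ range (n + 1), (-1:ℝ) ^ (n - t) * (n.choose t : ℝ) * P.eval (t : ℝ)
      = ∑ k ∈ range (n + 1), ((-1:ℤ) ^ (n - k) * (n.choose k : ℤ)) • P.eval ((0:ℝ) + k • (1:ℝ)) := by
    refine Finset.sum_congr rfl fun k _ => ?_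
    have : (0:ℝ) + k • (1:ℝ) = (k : ℝ) := by simp
    rw [this, zsmul_eq_mul]
    push_cast
    ring
  rw [h2, ← h]


noncomputable def abelS (x : ℝ) (k : ℕ) : ℝ[X] :=
  ∑ t ∈ range (k + 1),
    C ((k.choose t : ℝ) * (x * (x + (t:ℝ)) ^ ((t:ℤ) - 1))) * (X + C ((k:ℝ) - t)) ^ (k - t)

lemma choose_mul_sub (k t : ℕ) (ht : t ≤ k) :
    (k+1).choose t * (k+1-t) = (k+1) * k.choose t := by
  have h1 := Nat.add_one_mul_choose_eq k (k - t)
  rw [Nat.choose_symm ht] at h1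
  have h2 : (k+1).choose (k-t+1) = (k+1).choose t := by
    rw [← Nat.choose_symm (by omega : k - t + 1 ≤ k + 1)]
    congr 1
    omega
  rw [show k + 1 - t = k - t + 1 by omega, ← h2]
  exact h1.symm

lemma abel_poly (x : ℝ) (hx : 0 < x) : ∀ k : ℕ, abelS x k = (X + C (x + (k:ℝ))) ^ k := by
  intro k
  induction k with
  | zero =>
    rw [abelS]
    rw [Finset.sum_range_one]
    simp only [Nat.choose_self, Nat.cast_one, one_mul, Nat.cast_zero, add_zero, sub_zero,
      zero_sub, pow_zero, mul_one, Nat.sub_zero, Nat.sub_self]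
    rw [zpow_neg_one, mul_inv_cancel₀ hx.ne', C_1]
  | succ k ih =>
    have hxt : ∀ t : ℕ, x + (t:ℝ) ≠ 0 := fun t => by positivity
    -- step 1: derivative of abelS x (k+1)
    have hder : derivative (abelS x (k+1)) = C (((k:ℝ))+1) * ((abelS x k).comp (X + C 1)) := by
      rw [abelS, map_sum, Finset.sum_range_succ, abelS, Polynomial.sum_comp, Finset.mul_sum]
      have hz : derivative
          (C (((k+1).choose (k+1) : ℝ) * (x * (x + ((k+1:ℕ):ℝ)) ^ (((k+1:ℕ):ℤ) - 1))) *
            (X + C (((k+1:ℕ):ℝ) - ((k+1:ℕ):ℝ))) ^ ((k+1) - (k+1))) = 0 := by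
        rw [Nat.sub_self, pow_zero, mul_one, derivative_C]
      rw [hz, add_zero]
      refine Finset.sum_congr rfl fun t htm => ?_
      have ht : t ≤ k := by simpa [Nat.lt_succ_iff] using htm
      rw [derivative_C_mul, derivative_pow, derivative_X_add_C, mul_one]
      simp only [mul_comp, C_comp, pow_comp, add_comp, X_comp]
      rw [show (k+1) - t - 1 = k - t by omega]
      rw [add_assoc (X : ℝ[X]), ← C_add,
        show (1:ℝ) + ((k:ℝ) - (t:ℝ)) = ((k+1:ℕ):ℝ) - (t:ℝ) by push_cast; ring,
        ← mul_assoc, ← C_mul]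
      rw [← mul_assoc (C ((k:ℝ)+1)), ← C_mul]
      congr 1
      congr 1
      have hc : (((k+1).choose t * (k+1-t) : ℕ) : ℝ) = (((k+1) * k.choose t : ℕ) : ℝ) :=
        congrArg _ (choose_mul_sub k t ht)
      push_cast at hc
      linear_combination (x * (x + (t:ℝ)) ^ ((t:ℤ) - 1)) * hc
    -- step 2: rewrite using ih
    have hcomp : (abelS x k).comp (X + C 1) = (X + C (x + ((k+1:ℕ):ℝ))) ^ k := by
      rw [ih, pow_comp, add_comp, X_comp, C_comp]
      rw [add_assoc, ← C_add]
      push_cast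
      ring_nf
    rw [hcomp] at hder
    -- step 3: derivative of RHS
    have hderR : derivative ((X + C (x + ((k+1:ℕ):ℝ))) ^ (k+1))
        = C (((k:ℝ))+1) * (X + C (x + ((k+1:ℕ):ℝ))) ^ k := by
      rw [derivative_pow, derivative_X_add_C, mul_one]
      push_cast
      ring_nf
    -- step 4: the difference is constant
    set D := abelS x (k+1) - (X + C (x + ((k+1:ℕ):ℝ))) ^ (k+1) with hD
    have hder0 : derivative D = 0 := by
      rw [hD, derivative_sub, hder, hderR, sub_self]
    have hDC : D = C (D.coeff 0) :=
      Polynomial.eq_C_of_natDegree_le_zero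
        (le_of_eq (Polynomial.natDegree_eq_zero_of_derivative_eq_zero hder0))
    -- step 5: evaluate at -(x + (k+1))
    have heval : D.eval (-(x + ((k+1:ℕ):ℝ))) = 0 := by
      rw [hD, eval_sub, eval_pow, eval_add, eval_X, eval_C, neg_add_cancel, zero_pow (by omega),
        sub_zero]
      rw [abelS, eval_finset_sum]
      have hterm : ∀ t ∈ range (k+2),
          ((C (((k+1).choose t : ℝ) * (x * (x + (t:ℝ)) ^ ((t:ℤ) - 1))) *
            (X + C (((k+1:ℕ):ℝ) - t)) ^ ((k+1) - t)).eval (-(x + ((k+1:ℕ):ℝ))))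
          = x * ((-1:ℝ) ^ ((k+1) - t) * ((k+1).choose t : ℝ) *
              ((X + C x) ^ k).eval (t:ℝ)) := by
        intro t htm
        have ht : t ≤ k + 1 := by simpa [Nat.lt_succ_iff] using htm
        rw [eval_mul, eval_C, eval_pow, eval_add, eval_X, eval_C]
        rw [show -(x + ((k+1:ℕ):ℝ)) + (((k+1:ℕ):ℝ) - t) = -(x + t) by push_cast; ring]
        rw [eval_pow, eval_add, eval_X, eval_C]
        rw [neg_pow]
        have hzp : (x + (t:ℝ)) ^ ((t:ℤ) - 1) * (x + (t:ℝ)) ^ ((k+1) - t)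
            = (x + (t:ℝ)) ^ k := by
          rw [← zpow_natCast (x + (t:ℝ)) ((k+1) - t), ← zpow_add₀ (hxt t)]
          rw [← zpow_natCast (x + (t:ℝ)) k]
          congr 1
          have : (((k+1) - t : ℕ) : ℤ) = ((k:ℤ)+1) - t := by
            push_cast [Nat.cast_sub ht]
            ring
          rw [this]
          ring
        calc ((k+1).choose t : ℝ) * (x * (x + (t:ℝ)) ^ ((t:ℤ) - 1)) *
              ((-1:ℝ) ^ ((k+1) - t) * (x + (t:ℝ)) ^ ((k+1) - t))
            = x * ((-1:ℝ) ^ ((k+1) - t) * ((k+1).choose t : ℝ) *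
                ((x + (t:ℝ)) ^ ((t:ℤ) - 1) * (x + (t:ℝ)) ^ ((k+1) - t))) := by ring
          _ = _ := by rw [hzp]; ring
      rw [Finset.sum_congr rfl hterm, ← Finset.mul_sum]
      have hdeg : ((X + C x) ^ k : ℝ[X]).degree < ((k+1 : ℕ) : WithBot ℕ) := by
        rw [Polynomial.degree_pow, Polynomial.degree_X_add_C]
        simp
        exact_mod_cast Nat.lt_succ_self k
      have := fd (k+1) ((X + C x) ^ k) hdeg
      have hsplit : ∑ t ∈ range (k+2), (-1:ℝ) ^ ((k+1) - t) * ((k+1).choose t : ℝ) *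
          ((X + C x) ^ k : ℝ[X]).eval (t:ℝ) = 0 := this
      rw [hsplit, mul_zero]
    rw [hDC, eval_C] at heval
    have : D = 0 := by rw [hDC, heval, map_zero]
    exact sub_eq_zero.mp this

lemma abel_real (x : ℝ) (hx : 0 < x) (k : ℕ) (y : ℝ) :
    ∑ t ∈ range (k+1), (k.choose t : ℝ) * (x * (x + (t:ℝ)) ^ ((t:ℤ) - 1)) *
      (y + ((k:ℝ) - t)) ^ (k - t) = (y + (x + (k:ℝ))) ^ k := by
  have h := congrArg (Polynomial.eval y) (abel_poly x hx k)
  rw [abelS] at h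
  simpa [eval_finset_sum, eval_mul, eval_pow, eval_add, eval_X, eval_C] using h

lemma swap1 (m n : ℕ) (hm : 1 ≤ m) (hmn : m ≤ n) :
    ∑ j ∈ Icc 1 n, ∑ s ∈ Icc j (m-1), T m n s
      = ∑ s ∈ Icc 1 (m-1), (s:ℝ) * T m n s := by
  rw [Finset.sum_comm' (t' := Icc 1 (m-1)) (s' := fun s => Icc 1 s)
    (fun j s => by simp only [Finset.mem_Icc]; omega)]
  refine Finset.sum_congr rfl fun s hs => ?_
  rw [Finset.sum_const, Nat.card_Icc]
  simp only [Finset.mem_Icc] at hs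
  rw [show s + 1 - 1 = s by omega, nsmul_eq_mul]

lemma swap2 (m n : ℕ) (hm : 1 ≤ m) (hmn : m ≤ n) :
    ∑ j ∈ Icc 1 n, ∑ s ∈ Icc (n-j+1) (m-1), T m n s
      = ∑ s ∈ Icc 1 (m-1), (s:ℝ) * T m n s := by
  rw [Finset.sum_comm' (t' := Icc 1 (m-1)) (s' := fun s => Icc (n-s+1) n)
    (fun j s => by simp only [Finset.mem_Icc]; omega)]
  refine Finset.sum_congr rfl fun s hs => ?_
  rw [Finset.sum_const, Nat.card_Icc]
  simp only [Finset.mem_Icc] at hs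
  rw [show n + 1 - (n - s + 1) = s by omega, nsmul_eq_mul]

lemma A_eq (m n : ℕ) (hm : 1 ≤ m) (hmn : m ≤ n) :
    ∑ s ∈ Icc 1 (m-1), (s:ℝ) * T m n s
      = ((m:ℝ) - 1) * ((n:ℝ)+1) ^ (m-2) / ((n:ℝ) - m + 1) := by
  rcases eq_or_lt_of_le hm with h1 | h2
  · rw [← h1]
    norm_num
  · have hm2 : 2 ≤ m := h2
    set k := m - 2 with hk
    have hkR : ((k:ℕ):ℝ) = (m:ℝ) - 2 := by
      rw [hk]; push_cast [Nat.cast_sub hm2]; ring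
    have hx : (0:ℝ) < (n:ℝ) - m + 1 := by
      have : (m:ℝ) ≤ n := by exact_mod_cast hmn
      linarith
    set x : ℝ := (n:ℝ) - m + 1 with hxdef
    rw [show Icc 1 (m-1) = Ico 1 ((m-1)+1) from (Finset.Ico_add_one_right_eq_Icc 1 (m-1)).symm,
      Finset.sum_Ico_eq_sum_range]
    rw [show (m-1)+1-1 = k+1 by omega]
    rw [← Finset.sum_range_reflect (fun t => ((1+t:ℕ):ℝ) * T m n (1+t)) (k+1)]
    simp only [Nat.add_sub_cancel]
    have key : ∀ t ∈ range (k+1), ((1+(k-t):ℕ):ℝ) * T m n (1+(k-t))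
        = (((m:ℝ)-1)/x) * ((k.choose t : ℝ) * (x * (x + (t:ℝ)) ^ ((t:ℤ) - 1)) *
            ((2:ℝ) + ((k:ℝ) - t)) ^ (k - t)) := by
      intro t htm
      have ht : t ≤ k := Nat.lt_succ_iff.mp (mem_range.mp htm)
      rw [T, Nat.add_comm 1 (k-t)]
      have hchoose : ((k-t) + 1) * (m-1).choose ((k-t)+1) = (m-1) * k.choose t := by
        have h := Nat.add_one_mul_choose_eq (m-2) (k-t)
        rw [show m - 2 + 1 = m - 1 by omega] at h
        rw [Nat.choose_symm ht] at h
        rw [mul_comm]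
        exact h.symm
      have hc1 : (((k-t)+1:ℕ):ℝ) * (((m-1).choose ((k-t)+1) : ℕ):ℝ)
          = ((m:ℝ)-1) * (k.choose t : ℝ) := by
        have hcast := congrArg (Nat.cast : ℕ → ℝ) hchoose
        push_cast [Nat.cast_sub hm, Nat.cast_sub ht] at hcast ⊢
        linarith [hcast]
      rw [show ((n:ℝ) - (((k-t)+1:ℕ):ℝ)) = x + t from by
        rw [hxdef]; push_cast [Nat.cast_sub ht, hkR]
        have : ((k:ℕ):ℝ) = (m:ℝ) - 2 := hkR
        linarith [this]]
      rw [show (m:ℤ) - (((k-t)+1:ℕ):ℤ) - 2 = (t:ℤ) - 1 from by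
        have : (k:ℤ) = (m:ℤ) - 2 := by rw [hk]; push_cast [Nat.cast_sub hm2]; ring
        push_cast [Nat.cast_sub ht]
        omega]
      rw [show ((((k-t)+1:ℕ)):ℝ) + 1 = (2:ℝ) + ((k:ℝ) - t) from by
        push_cast [Nat.cast_sub ht]; ring]
      rw [show ((((k-t)+1:ℕ)):ℤ) - 1 = ((k - t : ℕ):ℤ) from by push_cast; omega]
      rw [zpow_natCast]
      have hrhs : (((m:ℝ)-1)/x) * ((k.choose t : ℝ) * (x * (x + (t:ℝ)) ^ ((t:ℤ) - 1)) *
            ((2:ℝ) + ((k:ℝ) - t)) ^ (k - t))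
          = ((m:ℝ)-1) * ((k.choose t : ℝ) * (x + (t:ℝ)) ^ ((t:ℤ) - 1) *
            ((2:ℝ) + ((k:ℝ) - t)) ^ (k - t)) := by
        field_simp
      rw [hrhs]
      linear_combination ((x + (t:ℝ)) ^ ((t:ℤ) - 1) * ((2:ℝ) + ((k:ℝ) - t)) ^ (k - t)) * hc1
    rw [Finset.sum_congr rfl key, ← Finset.mul_sum, abel_real x hx k 2]
    rw [show (2:ℝ) + (x + (k:ℝ)) = (n:ℝ) + 1 from by rw [hxdef]; linarith [hkR]]
    rw [div_mul_eq_mul_div]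

end Aux

open Finset Polynomial in
/-- For `1 ≤ m ≤ n` and `p ∈ [0,1]`, the values `Q_{m,n,p}(j)` sum to one:
`Σ_{j=1}^n Q_{m,n,p}(j) = 1`. -/
theorem Q_sum_to_one (m n : ℕ) (hm : 1 ≤ m) (hmn : m ≤ n)
    (p : ℝ) (hp0 : 0 ≤ p) (hp1 : p ≤ 1) :
    ∑ j ∈ Finset.Icc 1 n, Q m n p j = 1 := by
  have hn1 : (0:ℝ) < (n:ℝ) + 1 := by positivity
  have hx : (0:ℝ) < (n:ℝ) - m + 1 := by
    have : (m:ℝ) ≤ n := by exact_mod_cast hmn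
    linarith
  simp only [Q]
  rw [Finset.sum_sub_distrib, Finset.sum_const, Nat.card_Icc,
    show n + 1 - 1 = n by omega]
  rw [← Finset.mul_sum, Finset.sum_add_distrib, ← Finset.mul_sum, ← Finset.mul_sum,
    swap1 m n hm hmn, swap2 m n hm hmn, A_eq m n hm hmn]
  set A := ((m:ℝ) - 1) * ((n:ℝ)+1) ^ (m-2) / ((n:ℝ) - m + 1) with hA
  rw [show p * A + (1 - p) * A = A by ring]
  rcases eq_or_lt_of_le hm with h1 | h2
  · subst h1
    have hA0 : A = 0 := by rw [hA]; norm_num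
    rw [hA0, mul_zero, sub_zero]
    have hn : 1 ≤ n := hmn
    have hnz : (n:ℝ) ≠ 0 := by
      have : (1:ℝ) ≤ (n:ℝ) := by exact_mod_cast hn
      linarith
    rw [show (n:ℝ) - ((1:ℕ):ℝ) + 2 = (n:ℝ) + 1 by push_cast; ring,
      show (n:ℝ) - ((1:ℕ):ℝ) + 1 = (n:ℝ) by push_cast; ring]
    rw [nsmul_eq_mul]
    field_simp
  · have hm2 : 2 ≤ m := h2
    have hpow : ((n:ℝ)+1) ^ (m-1) = ((n:ℝ)+1) ^ (m-2) * ((n:ℝ)+1) := by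
      rw [← pow_succ]
      congr 1
      omega
    rw [hA, hpow]
    have hne : ((n:ℝ)+1) ^ (m-2) ≠ 0 := by positivity
    have hxne : (n:ℝ) - m + 1 ≠ 0 := hx.ne'
    have hn1ne : (n:ℝ) + 1 ≠ 0 := hn1.ne'
    rw [nsmul_eq_mul]
    field_simp
    ring
end

section
/- Expected preference of the last car: for all integers 1 ≤ m ≤ n and every real p ∈ [0,1], Σ_{j=1}^{n} j·Q_{m,n,p}(j) = (n+2p)/2 − (p − 1/2)·((m-1)!/(n+1)^{m-1})·Σ_{s=0}^{m-1} (n+1)^{s}/s!. (Equivalently, the subtracted factor ((m-1)!/(n+1)^{m-1})·Σ_{s=0}^{m-1}(n+1)^s/s! equals e^{n+1}(m-1)!·P(Z ≤ m-1)/(n+1)^{m-1} for Z a Poisson random variable with parameter n+1.) -/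
section AuxPark
open Finset
open Finset

/-- Finite difference sums `D k j x = Σ (-1)^s C(k,s)(x+s)^j`. -/
noncomputable def D (k j : ℕ) (x : ℝ) : ℝ :=
  ∑ s ∈ range (k+1), (-1:ℝ)^s * (k.choose s : ℝ) * (x + s)^j

lemma D_rec (k j : ℕ) (x : ℝ) :
    D (k+1) j x = D k j x - D k j (x+1) := by
  have h1 : ∀ t ∈ range (k+1), (-1:ℝ)^(t+1) * (((k+1).choose (t+1) : ℕ) : ℝ) * (x + (↑(t+1):ℝ))^j
      = -((-1:ℝ)^t * (k.choose t : ℝ) * ((x+1) + t)^j)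
        + ((-1:ℝ)^(t+1) * (k.choose (t+1) : ℝ) * (x + (↑(t+1):ℝ))^j) := by
    intro t ht
    rw [Nat.choose_succ_succ]
    simp only [Nat.succ_eq_add_one]
    push_cast
    ring
  have h2 : ∑ t ∈ range (k+1), -((-1:ℝ)^t * (k.choose t : ℝ) * ((x+1) + t)^j)
      = - D k j (x+1) := by
    unfold D
    rw [← Finset.sum_neg_distrib]
  have h3 : (∑ t ∈ range (k+1), ((-1:ℝ)^(t+1) * (k.choose (t+1) : ℝ) * (x + (↑(t+1):ℝ))^j))
        + (-1:ℝ)^0 * (((k+1).choose 0 : ℕ) : ℝ) * (x + ((0:ℕ):ℝ))^j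
      = D k j x := by
    have e0 : (-1:ℝ)^0 * (((k+1).choose 0 : ℕ) : ℝ) * (x + ((0:ℕ):ℝ))^j
        = (-1:ℝ)^0 * ((k.choose 0 : ℕ) : ℝ) * (x + ((0:ℕ):ℝ))^j := by simp
    rw [e0, ← Finset.sum_range_succ' (fun s => (-1:ℝ)^s * ((k.choose s : ℕ) : ℝ) * (x + s)^j)]
    rw [Finset.sum_range_succ]
    simp [D]
  have lhs : D (k+1) j x
      = (∑ t ∈ range (k+1), ((-1:ℝ)^(t+1) * (((k+1).choose (t+1) : ℕ) : ℝ) * (x + (↑(t+1):ℝ))^j))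
        + (-1:ℝ)^0 * (((k+1).choose 0 : ℕ) : ℝ) * (x + ((0:ℕ):ℝ))^j := by
    unfold D
    rw [Finset.sum_range_succ' (fun s => (-1:ℝ)^s * (((k+1).choose s : ℕ) : ℝ) * (x + s)^j)]
  rw [lhs, Finset.sum_congr rfl h1, Finset.sum_add_distrib]
  linarith [h2, h3]

lemma D_eval : ∀ k : ℕ, ∀ j ≤ k, ∀ x : ℝ,
    D k j x = if j = k then (-1:ℝ)^k * (k.factorial : ℝ) else 0 := by
  intro k
  induction k with
  | zero =>
    intro j hj x
    interval_cases j
    simp [D]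
  | succ k ih =>
    intro j hj x
    have expand : D k j (x+1) = ∑ i ∈ range (j+1), (j.choose i : ℝ) * D k i x := by
      unfold D
      have step : ∀ s ∈ range (k+1), (-1:ℝ)^s * (k.choose s : ℝ) * ((x+1) + s)^j
          = ∑ i ∈ range (j+1), (j.choose i : ℝ) * ((-1:ℝ)^s * (k.choose s : ℝ) * (x + s)^i) := by
        intro s hs
        have e : ((x+1) + (s:ℝ))^j = ((x + s) + 1)^j := by ring
        rw [e, add_pow, Finset.mul_sum]
        apply Finset.sum_congr rfl
        intro i hi
        simp
        ring
      rw [Finset.sum_congr rfl step, Finset.sum_comm]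
      apply Finset.sum_congr rfl
      intro i hi
      rw [← Finset.mul_sum]
    have key : D (k+1) j x = - ∑ i ∈ range j, (j.choose i : ℝ) * D k i x := by
      rw [D_rec, expand, Finset.sum_range_succ]
      simp
    rcases Nat.lt_or_ge j (k+1) with hjk | hjk
    · have hne : j ≠ k + 1 := by omega
      rw [key, if_neg hne]
      have hz : ∀ i ∈ range j, (j.choose i : ℝ) * D k i x = 0 := by
        intro i hi
        simp only [mem_range] at hi
        rw [ih i (by omega), if_neg (by omega), mul_zero]
      rw [Finset.sum_eq_zero hz]
      simp
    · have hjeq : j = k + 1 := by omega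
      subst hjeq
      rw [key, if_pos rfl, Finset.sum_range_succ]
      have h0 : ∀ i ∈ range k, ((k+1).choose i : ℝ) * D k i x = 0 := by
        intro i hi
        simp only [mem_range] at hi
        rw [ih i (by omega), if_neg (by omega), mul_zero]
      rw [Finset.sum_eq_zero h0, zero_add, ih k le_rfl, if_pos rfl,
        Nat.choose_succ_self_right]
      push_cast [Nat.factorial_succ]
      ring

noncomputable def Gs (k : ℕ) (x y : ℝ) : ℝ :=
  ∑ s ∈ range (k+1), (k.choose s : ℝ) * (x + s)^s * (y - s)^(k - s)

noncomputable def Hsf (k : ℕ) (z : ℝ) : ℝ :=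
  ∑ i ∈ range (k+1), (k.factorial : ℝ)/(i.factorial : ℝ) * z^i

lemma Gs_at_neg (k : ℕ) (x : ℝ) : Gs k x (-x) = (k.factorial : ℝ) := by
  have e : ∀ s ∈ range (k+1), (k.choose s : ℝ) * (x + s)^s * ((-x) - s)^(k - s)
      = (-1:ℝ)^k * ((-1:ℝ)^s * (k.choose s : ℝ) * (x + s)^k) := by
    intro s hs
    simp only [mem_range] at hs
    have h1 : ((-x:ℝ) - s) = -(x + s) := by ring
    rw [h1, neg_pow]
    have h2 : (x + (s:ℝ))^s * (x + s)^(k-s) = (x + s)^k := by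
      rw [← pow_add]
      congr 1
      omega
    have hss : (-1:ℝ)^s * (-1:ℝ)^s = 1 := by
      rw [← pow_add]
      have h : s + s = 2*s := by ring
      rw [h, pow_mul]
      norm_num
    have this1 : (-1:ℝ)^(k-s) * (-1:ℝ)^s = (-1:ℝ)^k := by
      rw [← pow_add]
      congr 1
      omega
    have h3 : (-1:ℝ)^(k-s) = (-1:ℝ)^k * (-1:ℝ)^s := by
      calc (-1:ℝ)^(k-s) = ((-1:ℝ)^(k-s) * (-1:ℝ)^s) * (-1:ℝ)^s := by
            rw [mul_assoc, hss, mul_one]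
        _ = (-1:ℝ)^k * (-1:ℝ)^s := by rw [this1]
    calc (k.choose s : ℝ) * (x + s)^s * ((-1:ℝ)^(k-s) * (x+s)^(k-s))
        = (-1:ℝ)^(k-s) * ((k.choose s : ℝ) * ((x + s)^s * (x+s)^(k-s))) := by ring
      _ = (-1:ℝ)^k * ((-1:ℝ)^s * (k.choose s : ℝ) * (x + s)^k) := by rw [h2, h3]; ring
  unfold Gs
  rw [Finset.sum_congr rfl e, ← Finset.mul_sum]
  have hD : (∑ s ∈ range (k+1), (-1:ℝ)^s * (k.choose s : ℝ) * (x + s)^k) = D k k x := rfl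
  rw [hD, D_eval k k le_rfl, if_pos rfl, ← mul_assoc, ← mul_pow]
  simp

lemma Hsf_at_zero (k : ℕ) : Hsf k 0 = (k.factorial : ℝ) := by
  unfold Hsf
  rw [Finset.sum_eq_single 0]
  · simp
  · intro i hi hne
    simp [zero_pow hne]
  · simp

lemma Gs_hasDeriv (k : ℕ) (x y : ℝ) :
    HasDerivAt (fun y => Gs (k+1) x y) ((k+1) * Gs k x y) y := by
  have h : HasDerivAt (fun y => Gs (k+1) x y)
      (∑ s ∈ range (k+2), ((k+1).choose s : ℝ) * (x + s)^s *
        (((k+1-s : ℕ) : ℝ) * (y - s)^(k-s))) y := by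
    apply HasDerivAt.fun_sum
    intro s hs
    have hb : HasDerivAt (fun y : ℝ => (y - (s:ℝ))^(k+1-s))
        (((k+1-s : ℕ) : ℝ) * (y - s)^(k+1-s-1) * 1) y :=
      ((hasDerivAt_id y).sub_const (s:ℝ)).pow _
    have hexp : k+1-s-1 = k-s := by omega
    rw [hexp, mul_one] at hb
    simpa [mul_assoc, mul_comm, mul_left_comm] using
      hb.const_mul (((k+1).choose s : ℝ) * (x + s)^s)
  have e : (∑ s ∈ range (k+2), ((k+1).choose s : ℝ) * (x + s)^s *
        (((k+1-s : ℕ) : ℝ) * (y - s)^(k-s))) = (k+1) * Gs k x y := by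
    rw [Finset.sum_range_succ]
    have hlast : (((k+1-(k+1) : ℕ)) : ℝ) = 0 := by norm_num
    rw [hlast]
    rw [zero_mul, mul_zero, add_zero]
    unfold Gs
    rw [Finset.mul_sum]
    apply Finset.sum_congr rfl
    intro s hs
    simp only [mem_range] at hs
    have hch : (k+1-s) * ((k+1).choose s) = (k+1) * (k.choose s) := by
      have h := Nat.choose_mul_succ_eq k s
      rw [Nat.mul_comm, ← h, Nat.mul_comm]
    have hchR : (((k+1-s : ℕ)) : ℝ) * (((k+1).choose s : ℕ) : ℝ) = ((k:ℝ)+1) * (k.choose s : ℝ) := by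
      have := congrArg (fun t : ℕ => (t : ℝ)) hch
      push_cast at this
      convert this using 2 <;> push_cast <;> ring
    calc ((k+1).choose s : ℝ) * (x + s)^s * (((k+1-s : ℕ) : ℝ) * (y - s)^(k-s))
        = ((((k+1-s : ℕ)) : ℝ) * (((k+1).choose s : ℕ) : ℝ)) * ((x + s)^s * (y - s)^(k-s)) := by
          ring
      _ = ((k:ℝ)+1) * ((k.choose s : ℝ) * (x + s)^s * (y - s)^(k-s)) := by rw [hchR]; ring
  rw [← e]
  exact h

lemma Hsf_hasDeriv (k : ℕ) (x y : ℝ) :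
    HasDerivAt (fun y => Hsf (k+1) (x+y)) ((k+1) * Hsf k (x+y)) y := by
  have h : HasDerivAt (fun y => Hsf (k+1) (x+y))
      (∑ i ∈ range (k+2), ((k+1).factorial : ℝ)/(i.factorial : ℝ) *
        ((i : ℝ) * (x+y)^(i-1))) y := by
    apply HasDerivAt.fun_sum
    intro i hi
    have hb : HasDerivAt (fun y : ℝ => (x + y)^i)
        (((i : ℕ) : ℝ) * (x + y)^(i-1) * 1) y :=
      ((hasDerivAt_id y).const_add x).pow _
    rw [mul_one] at hb
    simpa [mul_assoc, mul_comm, mul_left_comm] using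
      hb.const_mul (((k+1).factorial : ℝ)/(i.factorial : ℝ))
  have e : (∑ i ∈ range (k+2), ((k+1).factorial : ℝ)/(i.factorial : ℝ) *
        ((i : ℝ) * (x+y)^(i-1))) = (k+1) * Hsf k (x+y) := by
    rw [Finset.sum_range_succ' (fun i => ((k+1).factorial : ℝ)/(i.factorial : ℝ) *
        ((i : ℝ) * (x+y)^(i-1)))]
    simp only [Nat.cast_zero, zero_mul, mul_zero, add_zero]
    unfold Hsf
    rw [Finset.mul_sum]
    apply Finset.sum_congr rfl
    intro i hi
    have hfact : ((i+1).factorial : ℝ) = ((i:ℝ)+1) * (i.factorial : ℝ) := by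
      rw [Nat.factorial_succ]; push_cast; ring
    have hfne : (i.factorial : ℝ) ≠ 0 := by positivity
    have hfne1 : ((i+1).factorial : ℝ) ≠ 0 := by positivity
    have hkfact : ((k+1).factorial : ℝ) = ((k:ℝ)+1) * (k.factorial : ℝ) := by
      rw [Nat.factorial_succ]; push_cast; ring
    have hsimp : (i+1) - 1 = i := by omega
    rw [hsimp]
    push_cast
    rw [hfact, hkfact]
    field_simp
  rw [← e]
  exact h

lemma Gs_eq (k : ℕ) (x y : ℝ) : Gs k x y = Hsf k (x+y) := by
  induction k generalizing y with
  | zero => simp [Gs, Hsf]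
  | succ k ih =>
    set f : ℝ → ℝ := fun y => Gs (k+1) x y - Hsf (k+1) (x+y) with hf
    have hd : ∀ y, HasDerivAt f 0 y := by
      intro y
      have := (Gs_hasDeriv k x y).sub (Hsf_hasDeriv k x y)
      rw [ih y] at this
      rw [sub_self] at this
      exact this
    have hconst : ∀ y z : ℝ, f y = f z :=
      is_const_of_deriv_eq_zero (fun y => (hd y).differentiableAt)
        (fun y => (hd y).deriv)
    have hzero : f (-x) = 0 := by
      simp only [hf]
      rw [Gs_at_neg]
      have hx : x + -x = 0 := by ring
      rw [hx, Hsf_at_zero, sub_self]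
    have := hconst y (-x)
    rw [hzero] at this
    have : Gs (k+1) x y = Hsf (k+1) (x+y) := by
      have h2 : f y = 0 := this
      simp only [hf] at h2
      linarith
    exact this

lemma Hsf_succ_sub (k : ℕ) (z : ℝ) : Hsf (k+1) z - (k+1) * Hsf k z = z^(k+1) := by
  unfold Hsf
  rw [Finset.mul_sum, Finset.sum_range_succ]
  have e : ∀ i ∈ range (k+1), ((k:ℝ)+1) * ((k.factorial : ℝ)/(i.factorial : ℝ) * z^i)
      = ((k+1).factorial : ℝ)/(i.factorial : ℝ) * z^i := by
    intro i hi
    rw [Nat.factorial_succ]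
    push_cast
    ring
  rw [Finset.sum_congr rfl e]
  have : ((k+1).factorial : ℝ)/(((k+1).factorial : ℝ)) = 1 := by
    have : ((k+1).factorial : ℝ) ≠ 0 := by positivity
    field_simp
  rw [this]
  ring

lemma Wsum (j : ℕ) (x y : ℝ) :
    (y - j) * ∑ t ∈ range j, (j.choose t : ℝ) * (x + t)^t * (y - t)^(j-1-t) + (x + j)^j
      = (x + y)^j := by
  rcases j with _ | j'
  · simp
  have e : ∀ t ∈ range (j'+1), (y - ((j'+1 : ℕ):ℝ)) * (((j'+1).choose t : ℝ) * (x + t)^t * (y - t)^(j'+1-1-t))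
      = ((j'+1).choose t : ℝ) * (x + t)^t * (y - t)^(j'+1-t)
        - ((j'+1-t : ℕ) : ℝ) * ((j'+1).choose t : ℝ) * ((x + t)^t * (y - t)^(j'+1-1-t)) := by
    intro t ht
    simp only [mem_range] at ht
    have h1 : (y - ((j'+1 : ℕ):ℝ)) = (y - t) - ((j'+1 - t : ℕ) : ℝ) := by
      push_cast [Nat.cast_sub (by omega : t ≤ j'+1)]
      ring
    have h2 : (y - (t:ℝ)) * (y - t)^(j'+1-1-t) = (y - t)^(j'+1-t) := by
      rw [← pow_succ']
      congr 1
      omega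
    rw [h1, sub_mul, ← h2]
    ring
  rw [Finset.mul_sum, Finset.sum_congr rfl e, Finset.sum_sub_distrib]
  have efirst : Gs (j'+1) x y
      = (∑ t ∈ range (j'+1), ((j'+1).choose t : ℝ) * (x + t)^t * (y - t)^(j'+1-t))
        + (x + ((j'+1 : ℕ):ℝ))^(j'+1) := by
    unfold Gs
    rw [Finset.sum_range_succ]
    simp
  have esecond : ∑ t ∈ range (j'+1), ((j'+1-t : ℕ) : ℝ) * ((j'+1).choose t : ℝ) * ((x + t)^t * (y - t)^(j'+1-1-t))
      = (((j'+1:ℕ)):ℝ) * Gs j' x y := by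
    unfold Gs
    rw [Finset.mul_sum]
    apply Finset.sum_congr rfl
    intro t ht
    simp only [mem_range] at ht
    have hch : (j'+1 - t) * ((j'+1).choose t) = (j'+1) * (j'.choose t) := by
      have h := Nat.choose_mul_succ_eq j' t
      rw [Nat.mul_comm, ← h, Nat.mul_comm]
    have hchR : ((j'+1 - t : ℕ) : ℝ) * (((j'+1).choose t : ℕ) : ℝ)
        = (((j'+1:ℕ)):ℝ) * ((j'.choose t : ℕ) : ℝ) := by
      exact_mod_cast congrArg (fun a : ℕ => (a:ℝ)) hch
    have hexp : j'+1 - 1 - t = j' - t := by omega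
    rw [hexp]
    calc ((j'+1-t : ℕ) : ℝ) * (((j'+1).choose t : ℕ) : ℝ) * ((x + t)^t * (y - t)^(j'-t))
        = (((j'+1-t : ℕ) : ℝ) * (((j'+1).choose t : ℕ) : ℝ)) * ((x + t)^t * (y - t)^(j'-t)) := by
          ring
      _ = (((j'+1:ℕ)):ℝ) * ((j'.choose t : ℝ) * (x + t)^t * (y - t)^(j'-t)) := by rw [hchR]; ring
  have h1 := Gs_eq (j'+1) x y
  have h2 := Gs_eq j' x y
  have h3 := Hsf_succ_sub j' (x+y)
  rw [h1] at efirst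
  rw [h2] at esecond
  push_cast at efirst esecond h3 ⊢
  linarith

lemma Ssum (k : ℕ) (y : ℝ) :
    ∑ s ∈ range (k+1), (k.choose s : ℝ) * (1 + (s:ℝ))^(s-1) * (y - s)^(k-s) = (y+1)^k := by
  rcases k with _ | k'
  · simp
  have e : ∀ s ∈ range (k'+2), ((k'+1).choose s : ℝ) * (1 + (s:ℝ))^(s-1) * (y - s)^(k'+1-s)
      = ((k'+1).choose s : ℝ) * (1 + (s:ℝ))^s * (y - s)^(k'+1-s)
        - (s:ℝ) * ((k'+1).choose s : ℝ) * ((1 + (s:ℝ))^(s-1) * (y - s)^(k'+1-s)) := by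
    intro s hs
    have hkey : (1 + (s:ℝ))^(s-1) = (1 + (s:ℝ))^s - (s:ℝ) * (1 + (s:ℝ))^(s-1) := by
      rcases s with _ | t
      · norm_num
      · have : (1 + ((t+1:ℕ):ℝ))^(t+1) = (1 + ((t+1:ℕ):ℝ))^(t+1-1) * (1 + ((t+1:ℕ):ℝ)) := by
          rw [← pow_succ]
          congr 1
        rw [this]
        have ht : t+1-1 = t := rfl
        rw [ht]
        push_cast
        ring
    calc ((k'+1).choose s : ℝ) * (1 + (s:ℝ))^(s-1) * (y - s)^(k'+1-s)
        = ((k'+1).choose s : ℝ) * ((1 + (s:ℝ))^(s-1)) * (y - s)^(k'+1-s) := by ring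
      _ = ((k'+1).choose s : ℝ) * ((1 + (s:ℝ))^s - (s:ℝ) * (1 + (s:ℝ))^(s-1)) * (y - s)^(k'+1-s) := by
          rw [← hkey]
      _ = _ := by ring
  rw [Finset.sum_congr rfl e, Finset.sum_sub_distrib]
  have efirst : ∑ s ∈ range (k'+2), ((k'+1).choose s : ℝ) * (1 + (s:ℝ))^s * (y - s)^(k'+1-s)
      = Gs (k'+1) 1 y := rfl
  have esecond : ∑ s ∈ range (k'+2), (s:ℝ) * ((k'+1).choose s : ℝ) * ((1 + (s:ℝ))^(s-1) * (y - s)^(k'+1-s))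
      = (((k'+1:ℕ)):ℝ) * Gs k' 2 (y-1) := by
    rw [Finset.sum_range_succ' (fun s => (s:ℝ) * ((k'+1).choose s : ℝ) * ((1 + (s:ℝ))^(s-1) * (y - s)^(k'+1-s)))]
    simp only [Nat.cast_zero, zero_mul, mul_zero, add_zero]
    unfold Gs
    rw [Finset.mul_sum]
    apply Finset.sum_congr rfl
    intro t ht
    simp only [mem_range] at ht
    have hch : (t+1) * ((k'+1).choose (t+1)) = (k'+1) * (k'.choose t) := by
      have h := Nat.add_one_mul_choose_eq k' t
      rw [Nat.mul_comm]
      exact h.symm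
    have hchR : (((t+1:ℕ)):ℝ) * (((k'+1).choose (t+1) : ℕ) : ℝ)
        = (((k'+1:ℕ)):ℝ) * ((k'.choose t : ℕ) : ℝ) := by
      exact_mod_cast congrArg (fun a : ℕ => (a:ℝ)) hch
    have hexp1 : t+1-1 = t := rfl
    have hexp2 : k'+1-(t+1) = k'-t := by omega
    have hb1 : (1 + ((t+1:ℕ):ℝ)) = (2 + (t:ℝ)) := by push_cast; ring
    have hb2 : (y - ((t+1:ℕ):ℝ)) = ((y-1) - (t:ℝ)) := by push_cast; ring
    rw [hexp1, hexp2, hb1, hb2]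
    calc (((t+1:ℕ)):ℝ) * (((k'+1).choose (t+1)) : ℝ) * ((2 + (t:ℝ))^t * ((y-1) - (t:ℝ))^(k'-t))
        = ((((t+1:ℕ)):ℝ) * (((k'+1).choose (t+1) : ℕ) : ℝ)) * ((2 + (t:ℝ))^t * ((y-1) - (t:ℝ))^(k'-t)) := by
          push_cast; ring
      _ = (((k'+1:ℕ)):ℝ) * ((k'.choose t : ℝ) * (2 + (t:ℝ))^t * ((y-1) - (t:ℝ))^(k'-t)) := by
          rw [hchR]; ring
  rw [efirst, esecond, Gs_eq, Gs_eq]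
  have h3 := Hsf_succ_sub k' (1+y)
  have hz : (2 + (y - 1)) = 1 + y := by ring
  rw [hz]
  push_cast at h3 ⊢
  have hyy : (1 + y)^(k'+1) = (y+1)^(k'+1) := by ring
  linarith

lemma aux_pow (s : ℕ) :
    ((s:ℝ)+1)^((s:ℤ)-1) * (s:ℝ) = (1+(s:ℝ))^s - (1+(s:ℝ))^(s-1) := by
  rcases s with _ | t
  · norm_num
  · have h1 : ((t+1:ℕ):ℤ) - 1 = (t:ℤ) := by push_cast; ring
    rw [h1, zpow_natCast]
    have h2 : (1+((t+1:ℕ):ℝ))^(t+1) = (1+((t+1:ℕ):ℝ))^t * (1+((t+1:ℕ):ℝ)) := pow_succ _ _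
    have h3 : (t+1) - 1 = t := rfl
    rw [h2, h3]
    push_cast
    ring

lemma aux_pow2 (s : ℕ) :
    ((s:ℝ)+1)^((s:ℤ)-1) * ((s:ℝ)+1) = (1+(s:ℝ))^s := by
  have hne : ((s:ℝ)+1) ≠ 0 := by positivity
  have h1 : ((s:ℝ)+1)^((s:ℤ)-1+1) = ((s:ℝ)+1)^((s:ℤ)-1) * ((s:ℝ)+1) := zpow_add_one₀ hne _
  rw [← h1]
  have h2 : (s:ℤ)-1+1 = ((s:ℕ):ℤ) := by ring
  rw [h2, zpow_natCast]
  congr 1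
  ring

lemma Usum (k n : ℕ) (h : k < n) :
    ∑ s ∈ range (k+1), T (k+1) n s * ((s:ℝ) * ((n:ℝ) - s))
      = Hsf k ((n:ℝ)+1) - ((n:ℝ)+1)^k := by
  have e : ∀ s ∈ range (k+1), T (k+1) n s * ((s:ℝ) * ((n:ℝ) - s))
      = (k.choose s : ℝ) * (1+(s:ℝ))^s * ((n:ℝ) - s)^(k-s)
        - (k.choose s : ℝ) * (1+(s:ℝ))^(s-1) * ((n:ℝ) - s)^(k-s) := by
    intro s hs
    simp only [mem_range] at hs
    have hch : k + 1 - 1 = k := rfl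
    have hpos : (0:ℝ) < (n:ℝ) - s := by
      have : (s:ℝ) < (n:ℝ) := by exact_mod_cast (by omega : s < n)
      linarith
    have hne : ((n:ℝ) - s) ≠ 0 := ne_of_gt hpos
    have hz1 : ((n:ℝ) - s)^(((k+1:ℕ):ℤ) - s - 2) * ((n:ℝ) - s)
        = ((n:ℝ) - s)^(k-s) := by
      have := (zpow_add_one₀ hne (((k+1:ℕ):ℤ) - s - 2)).symm
      rw [this]
      have he : ((k+1:ℕ):ℤ) - s - 2 + 1 = ((k-s:ℕ):ℤ) := by
        push_cast [Nat.cast_sub (by omega : s ≤ k)]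
        ring
      rw [he, zpow_natCast]
    unfold T
    rw [hch]
    calc (k.choose s : ℝ) * ((n:ℝ) - s)^(((k+1:ℕ):ℤ) - s - 2) * ((s:ℝ)+1)^((s:ℤ)-1)
          * ((s:ℝ) * ((n:ℝ) - s))
        = (k.choose s : ℝ) * (((n:ℝ) - s)^(((k+1:ℕ):ℤ) - s - 2) * ((n:ℝ) - s))
          * (((s:ℝ)+1)^((s:ℤ)-1) * (s:ℝ)) := by ring
      _ = (k.choose s : ℝ) * ((n:ℝ) - s)^(k-s) * ((1+(s:ℝ))^s - (1+(s:ℝ))^(s-1)) := by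
          rw [hz1, aux_pow]
      _ = _ := by ring
  rw [Finset.sum_congr rfl e, Finset.sum_sub_distrib]
  have e1 : ∑ s ∈ range (k+1), (k.choose s : ℝ) * (1+(s:ℝ))^s * ((n:ℝ) - s)^(k-s)
      = Gs k 1 (n:ℝ) := rfl
  have e2 : ∑ s ∈ range (k+1), (k.choose s : ℝ) * (1+(s:ℝ))^(s-1) * ((n:ℝ) - s)^(k-s)
      = ((n:ℝ)+1)^k := Ssum k (n:ℝ)
  rw [e1, e2, Gs_eq]
  rw [show (1:ℝ) + (n:ℝ) = (n:ℝ) + 1 from by ring]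

lemma InnerEq (k : ℕ) (N : ℝ) :
    (N - 1 - (k:ℝ)) * ∑ s ∈ range (k+1), (((k+1).choose s : ℝ) * (s:ℝ) * (1+(s:ℝ))^s * (N - s)^(k-s))
      = ((k:ℝ)+1) * ((N+1) * ((N+1)^k - (2+(k:ℝ))^k)
          - (N - 1 - (k:ℝ)) * (Gs k 2 (N-1) - (2+(k:ℝ))^k)) := by
  have re : ∑ s ∈ range (k+1), (((k+1).choose s : ℝ) * (s:ℝ) * (1+(s:ℝ))^s * (N - s)^(k-s))
      = ((k:ℝ)+1) * ∑ t ∈ range k, ((k.choose t : ℝ) * (2+(t:ℝ))^(t+1) * ((N-1) - t)^(k-1-t)) := by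
    rw [Finset.sum_range_succ' (fun s => ((k+1).choose s : ℝ) * (s:ℝ) * (1+(s:ℝ))^s * (N - s)^(k-s))]
    simp only [Nat.cast_zero, mul_zero, zero_mul, add_zero]
    rw [Finset.mul_sum]
    apply Finset.sum_congr rfl
    intro t ht
    simp only [mem_range] at ht
    have hch : (t+1) * ((k+1).choose (t+1)) = (k+1) * (k.choose t) := by
      have h := Nat.add_one_mul_choose_eq k t
      rw [Nat.mul_comm]
      exact h.symm
    have hchR : (((t+1:ℕ)):ℝ) * (((k+1).choose (t+1) : ℕ) : ℝ)
        = (((k+1:ℕ)):ℝ) * ((k.choose t : ℕ) : ℝ) :=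
      (by exact_mod_cast congrArg (fun a : ℕ => (a:ℝ)) hch)
    have hexp : k - (t+1) = k-1-t := by omega
    have hb1 : (1 + ((t+1:ℕ):ℝ)) = (2 + (t:ℝ)) := by push_cast; ring
    have hb2 : (N - ((t+1:ℕ):ℝ)) = ((N-1) - (t:ℝ)) := by push_cast; ring
    rw [hexp, hb1, hb2]
    calc (((k+1).choose (t+1) : ℕ) : ℝ) * ((t+1:ℕ):ℝ) * (2+(t:ℝ))^(t+1) * ((N-1) - (t:ℝ))^(k-1-t)
        = ((((t+1:ℕ)):ℝ) * (((k+1).choose (t+1) : ℕ) : ℝ)) * ((2+(t:ℝ))^(t+1) * ((N-1) - (t:ℝ))^(k-1-t)) := by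
          push_cast; ring
      _ = (((k+1:ℕ)):ℝ) * ((k.choose t : ℝ) * (2+(t:ℝ))^(t+1) * ((N-1) - (t:ℝ))^(k-1-t)) := by
          rw [hchR]; ring
      _ = ((k:ℝ)+1) * ((k.choose t : ℝ) * (2+(t:ℝ))^(t+1) * ((N-1) - (t:ℝ))^(k-1-t)) := by
          push_cast; ring
  have split : ∀ t ∈ range k, ((k.choose t : ℝ) * (2+(t:ℝ))^(t+1) * ((N-1) - t)^(k-1-t))
      = (N+1) * ((k.choose t : ℝ) * (2+(t:ℝ))^t * ((N-1) - t)^(k-1-t))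
        - (k.choose t : ℝ) * (2+(t:ℝ))^t * ((N-1) - t)^(k-t) := by
    intro t ht
    simp only [mem_range] at ht
    have h1 : (2+(t:ℝ))^(t+1) = (2+(t:ℝ))^t * (2+(t:ℝ)) := pow_succ _ _
    have h2 : (2+(t:ℝ)) = (N+1) - ((N-1) - t) := by ring
    have h3 : ((N-1) - (t:ℝ)) * ((N-1) - t)^(k-1-t) = ((N-1) - t)^(k-t) := by
      rw [← pow_succ']
      congr 1
      omega
    rw [h1, h2, ← h3]
    ring
  rw [re, Finset.sum_congr rfl split, Finset.sum_sub_distrib, ← Finset.mul_sum]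
  have hW := Wsum k 2 (N-1)
  have hG : ∑ t ∈ range k, (k.choose t : ℝ) * (2+(t:ℝ))^t * ((N-1) - t)^(k-t)
      = Gs k 2 (N-1) - (2+(k:ℝ))^k := by
    unfold Gs
    rw [Finset.sum_range_succ]
    simp only [Nat.sub_self, pow_zero, mul_one, Nat.choose_self, Nat.cast_one, one_mul]
    ring
  have hWp : (N - 1 - (k:ℝ)) * ∑ t ∈ range k, (k.choose t : ℝ) * (2+(t:ℝ))^t * ((N-1) - t)^(k-1-t)
      = (2 + (N-1))^k - (2+(k:ℝ))^k := by
    linarith [hW]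
  have h2N : (2 + (N-1))^k = (N+1)^k := by ring_nf
  rw [h2N] at hWp
  rw [hG]
  linear_combination ((k:ℝ)+1)*(N+1)*hWp

lemma Vsum (k n : ℕ) (h : k < n) :
    ∑ s ∈ range (k+1), T (k+1) n s * ((s:ℝ) * ((s:ℝ)+1))
      = ((n:ℝ)*((n:ℝ)+1)^k)/((n:ℝ) - k) - Hsf k ((n:ℝ)+1) := by
  set N := (n:ℝ) with hN
  have hkN : (k:ℝ) < N := by rw [hN]; exact_mod_cast h
  have hNk : (0:ℝ) < N - k := by linarith
  have hNkne : N - (k:ℝ) ≠ 0 := ne_of_gt hNk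
  have e : ∀ s ∈ range (k+1), T (k+1) n s * ((s:ℝ) * ((s:ℝ)+1))
      = (k.choose s : ℝ) * (s:ℝ) * (1+(s:ℝ))^s * (N - s)^(((k+1:ℕ):ℤ) - s - 2) := by
    intro s hs
    unfold T
    rw [show k + 1 - 1 = k from rfl]
    calc (k.choose s : ℝ) * (N - s)^(((k+1:ℕ):ℤ) - s - 2) * ((s:ℝ)+1)^((s:ℤ)-1)
          * ((s:ℝ) * ((s:ℝ)+1))
        = (k.choose s : ℝ) * (s:ℝ) * (((s:ℝ)+1)^((s:ℤ)-1) * ((s:ℝ)+1)) * (N - s)^(((k+1:ℕ):ℤ) - s - 2) := by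
          ring
      _ = _ := by rw [aux_pow2]
  rw [Finset.sum_congr rfl e]
  rcases k with _ | k'
  · have hNne : N ≠ 0 := by simpa using hNkne
    rw [Finset.sum_range_one]
    simp [Hsf]
    field_simp
    norm_num
  rw [Finset.sum_range_succ]
  have elow : ∀ s ∈ range (k'+1), (( (k'+1).choose s : ℝ) * (s:ℝ) * (1+(s:ℝ))^s * (N - s)^(((k'+1+1:ℕ):ℤ) - s - 2))
      = ((k'+1).choose s : ℝ) * (s:ℝ) * (1+(s:ℝ))^s * (N - s)^(k'-s) := by
    intro s hs
    simp only [mem_range] at hs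
    have he : ((k'+1+1:ℕ):ℤ) - s - 2 = ((k'-s:ℕ):ℤ) := by
      push_cast [Nat.cast_sub (by omega : s ≤ k')]
      ring
    rw [he, zpow_natCast]
  rw [Finset.sum_congr rfl elow]
  have elast : ((k'+1).choose (k'+1) : ℝ) * ((k'+1:ℕ):ℝ) * (1+((k'+1:ℕ):ℝ))^(k'+1) * (N - ((k'+1:ℕ):ℝ))^(((k'+1+1:ℕ):ℤ) - ((k'+1:ℕ):ℤ) - 2)
      = ((k':ℝ)+1) * (2+(k':ℝ))^(k'+1) * (N - 1 - (k':ℝ))⁻¹ := by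
    have he : ((k'+1+1:ℕ):ℤ) - ((k'+1:ℕ):ℤ) - 2 = -1 := by push_cast; ring
    rw [he, zpow_neg_one, Nat.choose_self]
    have hb : (1+((k'+1:ℕ):ℝ)) = (2+(k':ℝ)) := by push_cast; ring
    have hb2 : (N - ((k'+1:ℕ):ℝ)) = (N - 1 - (k':ℝ)) := by push_cast; ring
    rw [hb, hb2]
    push_cast
    ring
  rw [elast]
  have hInner := InnerEq k' N
  have hGs2 : Gs k' 2 (N-1) = Hsf k' (N+1) := by
    rw [Gs_eq]
    congr 1
    ring
  rw [hGs2] at hInner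
  have hH := Hsf_succ_sub k' (N+1)
  have hcne : N - 1 - (k':ℝ) ≠ 0 := by
    push_cast at hNkne ⊢
    intro hc
    apply hNkne
    linarith
  have hkey : (N - 1 - (k':ℝ)) * (∑ s ∈ range (k'+1), ((k'+1).choose s : ℝ) * (s:ℝ) * (1+(s:ℝ))^s * (N - s)^(k'-s))
        + ((k':ℝ)+1) * (2+(k':ℝ))^(k'+1)
      = N*(N+1)^(k'+1) - (N - 1 - (k':ℝ)) * Hsf (k'+1) (N+1) := by
    linear_combination hInner + (N - 1 - (k':ℝ))*hH
  have hcc : N - ((k'+1:ℕ):ℝ) = N - 1 - (k':ℝ) := by push_cast; ring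
  rw [hcc]
  field_simp
  linear_combination hkey

lemma gauss1 (s : ℕ) : ∑ j ∈ Finset.Icc 1 s, (j:ℝ) = (s:ℝ)*((s:ℝ)+1)/2 := by
  induction s with
  | zero => simp
  | succ t ih =>
    rw [Finset.sum_Icc_succ_top (by omega : 1 ≤ t+1), ih]
    push_cast
    ring

lemma Ioc_eq_Icc (a b : ℕ) : Finset.Ioc a b = Finset.Icc (a+1) b := by
  ext x
  simp only [Finset.mem_Ioc, Finset.mem_Icc]
  omega

lemma gauss2 (n s : ℕ) (h : s ≤ n) :
    ∑ j ∈ Finset.Icc (n-s+1) n, (j:ℝ) = (s:ℝ)*(2*(n:ℝ) - s + 1)/2 := by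
  have hsplit := Finset.sum_Ioc_consecutive (fun j : ℕ => (j:ℝ))
    (by omega : (0:ℕ) ≤ n - s) (by omega : n - s ≤ n)
  rw [Ioc_eq_Icc, Ioc_eq_Icc, Ioc_eq_Icc] at hsplit
  rw [show (0:ℕ)+1 = 1 from rfl] at hsplit
  have h1 := gauss1 n
  have h2 := gauss1 (n-s)
  have hcast : ((n-s : ℕ):ℝ) = (n:ℝ) - s := by
    push_cast [Nat.cast_sub h]
    ring
  rw [h1, h2, hcast] at hsplit
  linarith [hsplit]

lemma swap2_s13 (k n : ℕ) (hk : k < n) :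
    ∑ j ∈ Finset.Icc 1 n, (j:ℝ) * (∑ s ∈ Finset.Icc j k, T (k+1) n s)
      = ∑ s ∈ range (k+1), T (k+1) n s * ((s:ℝ)*((s:ℝ)+1)/2) := by
  have e1 : ∀ j ∈ Finset.Icc 1 n, (j:ℝ) * (∑ s ∈ Finset.Icc j k, T (k+1) n s)
      = ∑ s ∈ Finset.Icc j k, (j:ℝ) * T (k+1) n s := fun j _ => Finset.mul_sum _ _ _
  rw [Finset.sum_congr rfl e1]
  rw [Finset.sum_comm' (fun j s => by
    simp only [Finset.mem_Icc, Finset.mem_range]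
    omega : ∀ j s, j ∈ Finset.Icc 1 n ∧ s ∈ Finset.Icc j k
        ↔ j ∈ Finset.Icc 1 s ∧ s ∈ range (k+1))]
  apply Finset.sum_congr rfl
  intro s hs
  rw [← Finset.sum_mul, gauss1]
  ring

lemma swap1_s13 (k n : ℕ) (hk : k < n) :
    ∑ j ∈ Finset.Icc 1 n, (j:ℝ) * (∑ s ∈ Finset.Icc (n-j+1) k, T (k+1) n s)
      = ∑ s ∈ range (k+1), T (k+1) n s * ((s:ℝ)*(2*(n:ℝ) - s + 1)/2) := by
  have e1 : ∀ j ∈ Finset.Icc 1 n, (j:ℝ) * (∑ s ∈ Finset.Icc (n-j+1) k, T (k+1) n s)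
      = ∑ s ∈ Finset.Icc (n-j+1) k, (j:ℝ) * T (k+1) n s := fun j _ => Finset.mul_sum _ _ _
  rw [Finset.sum_congr rfl e1]
  rw [Finset.sum_comm' (fun j s => by
    simp only [Finset.mem_Icc, Finset.mem_range]
    omega : ∀ j s, j ∈ Finset.Icc 1 n ∧ s ∈ Finset.Icc (n-j+1) k
        ↔ j ∈ Finset.Icc (n-s+1) n ∧ s ∈ range (k+1))]
  apply Finset.sum_congr rfl
  intro s hs
  simp only [mem_range] at hs
  rw [← Finset.sum_mul, gauss2 n s (by omega)]
  ring


/-- Expected preference of the last car: for `1 ≤ m ≤ n` and `p ∈ [0,1]`,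
`Σ_{j=1}^n j·Q_{m,n,p}(j) = (n+2p)/2 − (p−1/2)·((m-1)!/(n+1)^(m-1))·Σ_{s=0}^{m-1}(n+1)^s/s!`
(the subtracted factor equals `e^(n+1)(m-1)!·P(Z ≤ m-1)/(n+1)^(m-1)` for `Z` Poisson of
parameter `n+1`). -/
theorem Q_expected_value (m n : ℕ) (hm : 1 ≤ m) (hmn : m ≤ n)
    (p : ℝ) (hp0 : 0 ≤ p) (hp1 : p ≤ 1) :
    ∑ j ∈ Finset.Icc 1 n, (j : ℝ) * Q m n p j =
      ((n : ℝ) + 2 * p) / 2 -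
        (p - 1 / 2) * (((m - 1).factorial : ℝ) / ((n : ℝ) + 1) ^ (m - 1)) *
          ∑ s ∈ Finset.range m, ((n : ℝ) + 1) ^ s / (s.factorial : ℝ) := by
  obtain ⟨k, rfl⟩ : ∃ k, m = k + 1 := ⟨m - 1, by omega⟩
  have hk : k < n := by omega
  simp only [Nat.add_sub_cancel]
  set N := (n:ℝ) with hN
  have hkN : (k:ℝ) < N := by rw [hN]; exact_mod_cast hk
  have hNkpos : (0:ℝ) < N - k := by linarith
  have hN1 : (0:ℝ) < N + 1 := by
    have : (0:ℝ) ≤ (k:ℝ) := Nat.cast_nonneg k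
    linarith
  have hpow : ((N:ℝ)+1)^k ≠ 0 := by positivity
  set A : ℝ := (N - ((k+1:ℕ):ℝ) + 2) / ((N - ((k+1:ℕ):ℝ) + 1) * (N + 1)) with hA
  have step1 : ∀ j ∈ Finset.Icc 1 n, (j:ℝ) * Q (k+1) n p j
      = (j:ℝ) * A
        - (1/(N+1)^k) * (p * ((j:ℝ) * ∑ s ∈ Finset.Icc (n-j+1) k, T (k+1) n s)
          + (1-p) * ((j:ℝ) * ∑ s ∈ Finset.Icc j k, T (k+1) n s)) := by
    intro j hj
    unfold Q
    simp only [Nat.add_sub_cancel]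
    rw [hA]
    ring
  rw [Finset.sum_congr rfl step1, Finset.sum_sub_distrib, ← Finset.sum_mul, ← Finset.mul_sum,
    Finset.sum_add_distrib, ← Finset.mul_sum, ← Finset.mul_sum, gauss1 n,
    swap1_s13 k n hk, swap2_s13 k n hk]
  have comb : p * (∑ s ∈ range (k+1), T (k+1) n s * ((s:ℝ)*(2*N - s + 1)/2))
        + (1-p) * (∑ s ∈ range (k+1), T (k+1) n s * ((s:ℝ)*((s:ℝ)+1)/2))
      = (1/2) * (∑ s ∈ range (k+1), T (k+1) n s * ((s:ℝ)*((s:ℝ)+1)))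
        + p * (∑ s ∈ range (k+1), T (k+1) n s * ((s:ℝ)*(N - s))) := by
    rw [Finset.mul_sum, Finset.mul_sum, Finset.mul_sum, Finset.mul_sum,
      ← Finset.sum_add_distrib, ← Finset.sum_add_distrib]
    apply Finset.sum_congr rfl
    intro s hs
    ring
  rw [comb, Usum k n hk, Vsum k n hk]
  have hHsf : Hsf k (N+1) = (k.factorial:ℝ) * ∑ s ∈ range (k+1), (N+1)^s/(s.factorial:ℝ) := by
    unfold Hsf
    rw [Finset.mul_sum]
    apply Finset.sum_congr rfl
    intro i hi
    ring
  rw [show Finset.range (k+1) = range (k+1) from rfl]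
  rw [← hN]
  have hkey : (p - 1/2) * ((k.factorial:ℝ) / (N+1)^k) * (∑ s ∈ range (k+1), (N+1)^s/(s.factorial:ℝ))
      = (p - 1/2) * (Hsf k (N+1) / (N+1)^k) := by
    rw [hHsf]
    ring
  rw [hkey]
  have hcast : ((k+1:ℕ):ℝ) = (k:ℝ) + 1 := by push_cast; ring
  rw [hA, hcast]
  have hne1 : (N - ((k:ℝ)+1) + 1) ≠ 0 := by
    intro hc
    have : N - (k:ℝ) = 0 := by linarith
    exact (ne_of_gt hNkpos) this
  have hne2 : N - (k:ℝ) ≠ 0 := ne_of_gt hNkpos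
  have hne3 : (N+1) ≠ 0 := ne_of_gt hN1
  field_simp
  ring

end AuxPark
end

section
/- Sandwich bound for the total variation distance: for all integers 1 ≤ m ≤ n and every real p ∈ [0,1], |2p−1|·‖Q_{m,n,1} − Uni_n‖_TV ≤ ‖Q_{m,n,p} − Uni_n‖_TV ≤ ‖Q_{m,n,1} − Uni_n‖_TV. -/
/-- `Q` is affine in `p`. -/
lemma Q_affine (m n : ℕ) (p : ℝ) (j : ℕ) :
    Q m n p j = p * Q m n 1 j + (1 - p) * Q m n 0 j := by
  simp only [Q]; ring

/-- Reflection symmetry: on `{1,…,n}`, `Q` at `p = 0` is `Q` at `p = 1` reflected. -/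
lemma Q_sym (m n j : ℕ) (hj1 : 1 ≤ j) (hjn : j ≤ n) :
    Q m n 0 j = Q m n 1 (n + 1 - j) := by
  have h : n - (n + 1 - j) + 1 = j := by omega
  simp only [Q, h]; ring

lemma sum_reflect (n : ℕ) (h : ℕ → ℝ) :
    ∑ j ∈ Finset.Icc 1 n, h (n + 1 - j) = ∑ j ∈ Finset.Icc 1 n, h j := by
  refine Finset.sum_nbij' (fun j => n + 1 - j) (fun j => n + 1 - j) ?_ ?_ ?_ ?_ ?_
  · intro a ha; simp only [Finset.mem_Icc] at *; omega
  · intro a ha; simp only [Finset.mem_Icc] at *; omega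
  · intro a ha; show n + 1 - (n + 1 - a) = a; simp only [Finset.mem_Icc] at ha; omega
  · intro a ha; show n + 1 - (n + 1 - a) = a; simp only [Finset.mem_Icc] at ha; omega
  · intro a ha; rfl

/-- Sandwich bound for the total variation distance: for `1 ≤ m ≤ n` and `p ∈ [0,1]`,
`|2p−1|·‖Q_{m,n,1} − Uni_n‖_TV ≤ ‖Q_{m,n,p} − Uni_n‖_TV ≤ ‖Q_{m,n,1} − Uni_n‖_TV`. -/
theorem tv_sandwich (m n : ℕ) (hm : 1 ≤ m) (hmn : m ≤ n)
    (p : ℝ) (hp0 : 0 ≤ p) (hp1 : p ≤ 1) :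
    |2 * p - 1| * tvUni m n 1 ≤ tvUni m n p ∧ tvUni m n p ≤ tvUni m n 1 := by
  set f : ℕ → ℝ := fun j => Q m n 1 j - 1 / (n : ℝ) with hf
  set g : ℕ → ℝ := fun j => Q m n p j - 1 / (n : ℝ) with hg
  have hp1' : 0 ≤ 1 - p := by linarith
  have key : ∀ j, 1 ≤ j → j ≤ n → g j = p * f j + (1 - p) * f (n + 1 - j) := by
    intro j hj1 hjn
    simp only [hf, hg]
    rw [Q_affine m n p j, Q_sym m n j hj1 hjn]; ring
  have e1 : tvUni m n 1 = 1 / 2 * ∑ j ∈ Finset.Icc 1 n, |f j| := rfl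
  have ep : tvUni m n p = 1 / 2 * ∑ j ∈ Finset.Icc 1 n, |g j| := rfl
  have hreflg : ∑ j ∈ Finset.Icc 1 n, |g (n + 1 - j)| = ∑ j ∈ Finset.Icc 1 n, |g j| :=
    sum_reflect n (fun j => |g j|)
  have hreflf : ∑ j ∈ Finset.Icc 1 n, |f (n + 1 - j)| = ∑ j ∈ Finset.Icc 1 n, |f j| :=
    sum_reflect n (fun j => |f j|)
  constructor
  · -- lower bound
    have hpt : ∀ j ∈ Finset.Icc 1 n,
        |2 * p - 1| * |f j| ≤ p * |g j| + (1 - p) * |g (n + 1 - j)| := by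
      intro j hj
      simp only [Finset.mem_Icc] at hj
      have h1 : g j = p * f j + (1 - p) * f (n + 1 - j) := key j hj.1 hj.2
      have h2 : g (n + 1 - j) = p * f (n + 1 - j) + (1 - p) * f (n + 1 - (n + 1 - j)) :=
        key (n + 1 - j) (by omega) (by omega)
      have hjj : n + 1 - (n + 1 - j) = j := by omega
      rw [hjj] at h2
      have hid : (2 * p - 1) * f j = p * g j - (1 - p) * g (n + 1 - j) := by
        rw [h1, h2]; ring
      calc |2 * p - 1| * |f j| = |(2 * p - 1) * f j| := (abs_mul _ _).symm
        _ = |p * g j - (1 - p) * g (n + 1 - j)| := by rw [hid]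
        _ ≤ |p * g j| + |(1 - p) * g (n + 1 - j)| := abs_sub _ _
        _ = p * |g j| + (1 - p) * |g (n + 1 - j)| := by
            rw [abs_mul, abs_mul, abs_of_nonneg hp0, abs_of_nonneg hp1']
    have hsum := Finset.sum_le_sum hpt
    have heq : ∑ j ∈ Finset.Icc 1 n, (p * |g j| + (1 - p) * |g (n + 1 - j)|)
        = ∑ j ∈ Finset.Icc 1 n, |g j| := by
      rw [Finset.sum_add_distrib, ← Finset.mul_sum, ← Finset.mul_sum, hreflg]; ring
    rw [e1, ep]
    calc |2 * p - 1| * (1 / 2 * ∑ j ∈ Finset.Icc 1 n, |f j|)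
        = 1 / 2 * ∑ j ∈ Finset.Icc 1 n, |2 * p - 1| * |f j| := by
          rw [← Finset.mul_sum]; ring
      _ ≤ 1 / 2 * ∑ j ∈ Finset.Icc 1 n, (p * |g j| + (1 - p) * |g (n + 1 - j)|) := by
          linarith
      _ = 1 / 2 * ∑ j ∈ Finset.Icc 1 n, |g j| := by rw [heq]
  · -- upper bound
    have hpt : ∀ j ∈ Finset.Icc 1 n,
        |g j| ≤ p * |f j| + (1 - p) * |f (n + 1 - j)| := by
      intro j hj
      simp only [Finset.mem_Icc] at hj
      calc |g j| = |p * f j + (1 - p) * f (n + 1 - j)| := by rw [key j hj.1 hj.2]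
        _ ≤ |p * f j| + |(1 - p) * f (n + 1 - j)| := abs_add_le _ _
        _ = p * |f j| + (1 - p) * |f (n + 1 - j)| := by
            rw [abs_mul, abs_mul, abs_of_nonneg hp0, abs_of_nonneg hp1']
    have hsum := Finset.sum_le_sum hpt
    have heq : ∑ j ∈ Finset.Icc 1 n, (p * |f j| + (1 - p) * |f (n + 1 - j)|)
        = ∑ j ∈ Finset.Icc 1 n, |f j| := by
      rw [Finset.sum_add_distrib, ← Finset.mul_sum, ← Finset.mul_sum, hreflf]; ring
    rw [e1, ep]
    linarith
end

section
/- Upper bound on the total variation distance: for all integers 1 ≤ m ≤ n and every real p ∈ [0,1], ‖Q_{m,n,p} − Uni_n‖_TV ≤ (m−1)/((n+1)(n−m+1)). -/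
namespace TVAux

open Finset

noncomputable def gA (x : ℝ) (k : ℕ) : ℝ := if k = 0 then 1 else x * (x + k) ^ (k - 1)

noncomputable def abS (n : ℕ) (x y : ℝ) : ℝ :=
  ∑ k ∈ range (n + 1), (n.choose k : ℝ) * gA x k * (y + ((n - k : ℕ) : ℝ)) ^ (n - k)

noncomputable def huS (n : ℕ) (x y : ℝ) : ℝ :=
  ∑ k ∈ range (n + 1), (n.choose k : ℝ) * gA x k * gA y (n - k)

lemma gA_zero (x : ℝ) : gA x 0 = 1 := rfl

lemma gA_succ (x : ℝ) (k : ℕ) : gA x (k + 1) = x * (x + ((k + 1 : ℕ) : ℝ)) ^ k := by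
  simp [gA]

lemma abS_rev (n : ℕ) (y z : ℝ) :
    abS n y z = ∑ k ∈ range (n + 1), (n.choose k : ℝ) * gA y (n - k) * (z + (k : ℝ)) ^ k := by
  rw [abS, ← Finset.sum_range_reflect]
  refine Finset.sum_congr rfl fun k hk => ?_
  have hk' : k ≤ n := by simpa [Nat.lt_succ_iff] using hk
  have h1 : n + 1 - 1 - k = n - k := by omega
  have h2 : n - (n - k) = k := by omega
  rw [h1, h2, Nat.choose_symm hk']

lemma hurwitz_of (n : ℕ) (ih : ∀ x y : ℝ, abS n x y = (x + y + (n : ℝ)) ^ n) (x y : ℝ) :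
    huS (n + 1) x y = (x + y) * (x + y + ((n : ℝ) + 1)) ^ n := by
  have step1 : huS (n + 1) x y
      = (∑ k ∈ range (n + 1), (n.choose k : ℝ) * gA x k * gA y (n + 1 - k))
        + ∑ k ∈ range (n + 1), (n.choose k : ℝ) * gA x (k + 1) * gA y (n - k) := by
    rw [huS, Finset.sum_range_succ' (fun k => ((n+1).choose k : ℝ) * gA x k * gA y (n + 1 - k))]
    have hsplit : ∀ k ∈ range (n + 1),
        (((n+1).choose (k+1) : ℝ)) * gA x (k+1) * gA y (n + 1 - (k+1))
        = (n.choose (k+1) : ℝ) * gA x (k+1) * gA y (n - k)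
          + (n.choose k : ℝ) * gA x (k+1) * gA y (n - k) := by
      intro k hk
      have : (n+1).choose (k+1) = n.choose k + n.choose (k+1) := Nat.choose_succ_succ n k
      rw [this]
      push_cast
      ring
    rw [Finset.sum_congr rfl hsplit, Finset.sum_add_distrib]
    have e1 : (∑ k ∈ range (n + 1), (n.choose (k+1) : ℝ) * gA x (k+1) * gA y (n - k))
        + ((n+1).choose 0 : ℝ) * gA x 0 * gA y (n + 1 - 0)
        = ∑ k ∈ range (n + 2), (n.choose k : ℝ) * gA x k * gA y (n + 1 - k) := by
      rw [Finset.sum_range_succ' (fun k => (n.choose k : ℝ) * gA x k * gA y (n + 1 - k))]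
      simp only [Nat.choose_zero_right, Nat.cast_one, gA_zero]
      congr 1
      refine Finset.sum_congr rfl fun k hk => ?_
      have : n + 1 - (k + 1) = n - k := by omega
      rw [this]
    have e2 : ∑ k ∈ range (n + 2), (n.choose k : ℝ) * gA x k * gA y (n + 1 - k)
        = ∑ k ∈ range (n + 1), (n.choose k : ℝ) * gA x k * gA y (n + 1 - k) := by
      rw [Finset.sum_range_succ]
      simp
    linarith [e1, e2]
  have S1 : ∑ k ∈ range (n + 1), (n.choose k : ℝ) * gA x k * gA y (n + 1 - k)
      = y * (x + (y + 1) + (n : ℝ)) ^ n := by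
    have : ∀ k ∈ range (n + 1), (n.choose k : ℝ) * gA x k * gA y (n + 1 - k)
        = y * ((n.choose k : ℝ) * gA x k * ((y + 1) + ((n - k : ℕ) : ℝ)) ^ (n - k)) := by
      intro k hk
      have hk' : k ≤ n := by simpa [Nat.lt_succ_iff] using hk
      have h1 : n + 1 - k = (n - k) + 1 := by omega
      rw [h1, gA_succ]
      have : ((n - k + 1 : ℕ) : ℝ) = ((n - k : ℕ) : ℝ) + 1 := by push_cast; ring
      rw [this]; ring
    rw [Finset.sum_congr rfl this, ← Finset.mul_sum, ← abS, ih]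
  have S2 : ∑ k ∈ range (n + 1), (n.choose k : ℝ) * gA x (k + 1) * gA y (n - k)
      = x * (y + (x + 1) + (n : ℝ)) ^ n := by
    have : ∀ k ∈ range (n + 1), (n.choose k : ℝ) * gA x (k + 1) * gA y (n - k)
        = x * ((n.choose k : ℝ) * gA y (n - k) * ((x + 1) + (k : ℝ)) ^ k) := by
      intro k hk
      rw [gA_succ]
      have : ((k + 1 : ℕ) : ℝ) = (k : ℝ) + 1 := by push_cast; ring
      rw [this]; ring
    rw [Finset.sum_congr rfl this, ← Finset.mul_sum, ← abS_rev, ih]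
  rw [step1, S1, S2]; ring

theorem abel : ∀ (n : ℕ) (x y : ℝ), abS n x y = (x + y + (n : ℝ)) ^ n := by
  intro n
  induction n with
  | zero => intro x y; simp [abS, gA_zero]
  | succ n ih =>
    intro x y
    have key : abS (n + 1) x y
        = huS (n + 1) x y
          + ∑ k ∈ range (n + 2),
              (((n+1).choose k : ℝ) * gA x k * (((n + 1 - k : ℕ) : ℝ)
                * (y + ((n + 1 - k : ℕ) : ℝ)) ^ (n - k))) := by
      rw [abS, huS, ← Finset.sum_add_distrib]
      refine Finset.sum_congr rfl fun k hk => ?_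
      have hk' : k ≤ n + 1 := by simpa [Nat.lt_succ_iff] using hk
      rcases Nat.eq_or_lt_of_le hk' with h | h
      · subst h
        simp [gA_zero]
      · have hk2 : k ≤ n := by omega
        have h1 : n + 1 - k = (n - k) + 1 := by omega
        rw [h1, gA_succ]
        have hc : ((n - k + 1 : ℕ) : ℝ) = ((n - k : ℕ) : ℝ) + 1 := by push_cast; ring
        rw [hc, pow_succ]
        ring
    have second : ∑ k ∈ range (n + 2),
        (((n+1).choose k : ℝ) * gA x k * (((n + 1 - k : ℕ) : ℝ)
          * (y + ((n + 1 - k : ℕ) : ℝ)) ^ (n - k)))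
        = ((n : ℝ) + 1) * (x + (y + 1) + (n : ℝ)) ^ n := by
      rw [Finset.sum_range_succ]
      simp only [Nat.sub_self, Nat.cast_zero]
      rw [zero_mul, mul_zero, add_zero]
      have : ∀ k ∈ range (n + 1),
          (((n+1).choose k : ℝ) * gA x k * (((n + 1 - k : ℕ) : ℝ)
            * (y + ((n + 1 - k : ℕ) : ℝ)) ^ (n - k)))
          = ((n : ℝ) + 1) * ((n.choose k : ℝ) * gA x k * ((y + 1) + ((n - k : ℕ) : ℝ)) ^ (n - k)) := by
        intro k hk
        have hk' : k ≤ n := by simpa [Nat.lt_succ_iff] using hk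
        have hcm : ((n+1).choose k : ℝ) * ((n + 1 - k : ℕ) : ℝ) = ((n : ℝ) + 1) * (n.choose k : ℝ) := by
          have := Nat.choose_mul_succ_eq n k
          have h2 : ((n.choose k * (n+1) : ℕ) : ℝ) = (((n+1).choose k * (n + 1 - k) : ℕ) : ℝ) := by
            exact_mod_cast congrArg (Nat.cast (R := ℝ)) this
          push_cast at h2
          linarith
        have hc : ((n + 1 - k : ℕ) : ℝ) = ((n - k : ℕ) : ℝ) + 1 := by
          have : n + 1 - k = (n - k) + 1 := by omega
          rw [this]; push_cast; ring
        rw [hc] at hcm ⊢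
        linear_combination (gA x k * ((y + 1) + ((n - k : ℕ) : ℝ)) ^ (n - k)) * hcm
      rw [Finset.sum_congr rfl this, ← Finset.mul_sum, ← abS, ih]
    rw [key, hurwitz_of n ih, second]
    push_cast
    ring

lemma hurwitz (n : ℕ) (x y : ℝ) :
    huS (n + 1) x y = (x + y) * (x + y + ((n : ℝ) + 1)) ^ n :=
  hurwitz_of n (abel n) x y

lemma gA_eq (s : ℕ) : ((s : ℝ) + 1) ^ ((s : ℤ) - 1) = gA 1 s := by
  cases s with
  | zero => simp [gA]
  | succ t =>
    have h : ((t + 1 : ℕ) : ℤ) - 1 = ((t : ℕ) : ℤ) := by push_cast; ring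
    rw [h, zpow_natCast]
    simp only [gA, Nat.succ_ne_zero, if_false, Nat.add_sub_cancel]
    push_cast; ring

lemma T_eq_lt (k n s : ℕ) (hs : s < k) :
    T (k + 1) n s = (k.choose s : ℝ) * gA 1 s * ((n : ℝ) - s) ^ (k - s - 1) := by
  rw [T, gA_eq]
  have h1 : (k + 1 : ℕ) - 1 = k := by omega
  have h2 : ((k + 1 : ℕ) : ℤ) - s - 2 = ((k - s - 1 : ℕ) : ℤ) := by
    push_cast [Nat.cast_sub (by omega : s + 1 ≤ k), Nat.cast_sub hs.le]; omega
  rw [h1, h2, zpow_natCast]; ring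

lemma T_eq_top (k n : ℕ) : T (k + 1) n k = gA 1 k * ((n : ℝ) - k)⁻¹ := by
  rw [T, gA_eq]
  have h1 : (k + 1 : ℕ) - 1 = k := by omega
  have h2 : ((k + 1 : ℕ) : ℤ) - k - 2 = -1 := by push_cast; ring
  rw [h1, h2, zpow_neg_one, Nat.choose_self]
  push_cast; ring

lemma T_nonneg (k n s : ℕ) (hs : s < n) : 0 ≤ T (k + 1) n s := by
  rw [T]
  have h1 : (0 : ℝ) < (n : ℝ) - s := by
    have : (s : ℝ) < n := by exact_mod_cast hs
    linarith
  have h2 : (0 : ℝ) < (s : ℝ) + 1 := by positivity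
  have := zpow_pos h1 (((k + 1 : ℕ) : ℤ) - s - 2)
  have := zpow_pos h2 ((s : ℤ) - 1)
  positivity

lemma P1 (k n : ℕ) (hkn : k ≤ n) :
    ∑ s ∈ range (k + 1), (k.choose s : ℝ) * gA 1 s * ((n : ℝ) - s) ^ (k - s)
      = ((n : ℝ) + 1) ^ k := by
  have h := abel k 1 ((n : ℝ) - k)
  rw [abS] at h
  have e : ∀ s ∈ range (k + 1),
      (k.choose s : ℝ) * gA 1 s * (((n : ℝ) - k) + ((k - s : ℕ) : ℝ)) ^ (k - s)
      = (k.choose s : ℝ) * gA 1 s * ((n : ℝ) - s) ^ (k - s) := by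
    intro s hs
    have hs' : s ≤ k := by simpa [Nat.lt_succ_iff] using hs
    rw [Nat.cast_sub hs']
    ring_nf
  rw [Finset.sum_congr rfl e] at h
  rw [h]; ring

lemma P2 (k n : ℕ) :
    ∑ s ∈ range (k + 2), ((k + 1).choose s : ℝ) * gA 1 s * gA ((n : ℝ) - (k + 1)) (k + 1 - s)
      = ((n : ℝ) - k) * ((n : ℝ) + 1) ^ k := by
  have h := hurwitz k 1 ((n : ℝ) - (k + 1))
  rw [huS] at h
  rw [h]; ring

lemma W_mul (k n : ℕ) (hkn : k < n) :
    (∑ s ∈ range (k + 1), (s : ℝ) * T (k + 1) n s) * (((n : ℝ) - k) * ((n : ℝ) + 1))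
      = (k : ℝ) * ((n : ℝ) + 1) ^ k := by
  cases k with
  | zero => simp
  | succ K =>
    have hnk : (0 : ℝ) < (n : ℝ) - (K + 1) := by
      have : ((K : ℝ) + 1) < n := by exact_mod_cast hkn
      linarith
    set U := ∑ s ∈ range (K + 1), ((K+1).choose s : ℝ) * gA 1 s * ((n : ℝ) - s) ^ (K - s) with hU
    set V := ∑ s ∈ range (K + 1), ((K+1).choose s : ℝ) * gA 1 s * ((n : ℝ) - s) ^ (K - s + 1) with hV
    have hVeq : V = ((n : ℝ) + 1) ^ (K + 1) - gA 1 (K + 1) := by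
      have h1 := P1 (K + 1) n hkn.le
      rw [Finset.sum_range_succ] at h1
      simp only [Nat.choose_self, Nat.cast_one, Nat.sub_self, pow_zero] at h1
      have e : ∀ s ∈ range (K + 1),
          ((K+1).choose s : ℝ) * gA 1 s * ((n : ℝ) - s) ^ (K + 1 - s)
          = ((K+1).choose s : ℝ) * gA 1 s * ((n : ℝ) - s) ^ (K - s + 1) := by
        intro s hs
        have : K + 1 - s = K - s + 1 := by
          have := Finset.mem_range.mp hs; omega
        rw [this]
      rw [Finset.sum_congr rfl e] at h1
      rw [hV]; linarith
    have hUeq : U * ((n : ℝ) - (K + 1)) = ((n : ℝ) - K) * ((n : ℝ) + 1) ^ K - gA 1 (K + 1) := by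
      have h2 := P2 K n
      rw [Finset.sum_range_succ] at h2
      simp only [Nat.choose_self, Nat.cast_one, Nat.sub_self] at h2
      have hgA0 : gA ((n : ℝ) - (K + 1)) 0 = 1 := rfl
      rw [hgA0, mul_one] at h2
      have e : ∀ s ∈ range (K + 1),
          ((K + 1).choose s : ℝ) * gA 1 s * gA ((n : ℝ) - (K + 1)) (K + 1 - s)
          = (((K+1).choose s : ℝ) * gA 1 s * ((n : ℝ) - s) ^ (K - s)) * ((n : ℝ) - (K + 1)) := by
        intro s hs
        have hs' : s < K + 1 := Finset.mem_range.mp hs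
        have h3 : K + 1 - s = (K - s) + 1 := by omega
        rw [h3]
        have hgA : gA ((n : ℝ) - (K + 1)) ((K - s) + 1)
            = ((n : ℝ) - (K + 1)) * (((n : ℝ) - (K + 1)) + ((K - s + 1 : ℕ) : ℝ)) ^ (K - s) := by
          simp [gA]
        rw [hgA]
        have hc : ((n : ℝ) - (K + 1)) + ((K - s + 1 : ℕ) : ℝ) = (n : ℝ) - s := by
          push_cast [Nat.cast_sub (by omega : s ≤ K)]; ring
        rw [hc]; ring
      rw [Finset.sum_congr rfl e, ← Finset.sum_mul] at h2
      rw [hU]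
      push_cast at h2 ⊢
      linarith
    have expand : ∑ s ∈ range (K + 2), (s : ℝ) * T (K + 2) n s
        = (n : ℝ) * U - V + ((K : ℝ) + 1) * gA 1 (K + 1) * ((n : ℝ) - (K + 1))⁻¹ := by
      rw [Finset.sum_range_succ]
      rw [show T (K + 2) n (K + 1) = T ((K + 1) + 1) n (K + 1) from rfl, T_eq_top]
      have e : ∀ s ∈ range (K + 1), (s : ℝ) * T (K + 2) n s
          = (n : ℝ) * (((K+1).choose s : ℝ) * gA 1 s * ((n : ℝ) - s) ^ (K - s))
            - ((K+1).choose s : ℝ) * gA 1 s * ((n : ℝ) - s) ^ (K - s + 1) := by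
        intro s hs
        have hs' : s < K + 1 := Finset.mem_range.mp hs
        rw [show T (K + 2) n s = T ((K + 1) + 1) n s from rfl, T_eq_lt (K + 1) n s hs']
        have h4 : K + 1 - s - 1 = K - s := by omega
        rw [h4, pow_succ]
        ring
      rw [Finset.sum_congr rfl e, Finset.sum_sub_distrib, ← Finset.mul_sum, ← hU, ← hV]
      push_cast
      ring
    rw [show (K + 1 : ℕ) + 1 = K + 2 from rfl] at *
    rw [expand]
    have hc1 : ((K + 1 : ℕ) : ℝ) = (K : ℝ) + 1 := by push_cast; ring
    rw [hc1]
    have hinv : ((n : ℝ) - (K + 1))⁻¹ * ((n : ℝ) - (K + 1)) = 1 :=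
      inv_mul_cancel₀ (ne_of_gt hnk)
    have expand2 : ((n : ℝ) * U - V + ((K : ℝ) + 1) * gA 1 (K + 1) * ((n : ℝ) - (K + 1))⁻¹)
        * (((n : ℝ) - (K + 1)) * ((n : ℝ) + 1))
        = (n : ℝ) * (U * ((n : ℝ) - (K + 1))) * ((n : ℝ) + 1)
          - V * (((n : ℝ) - (K + 1)) * ((n : ℝ) + 1))
          + ((K : ℝ) + 1) * gA 1 (K + 1) * ((n : ℝ) + 1) := by
      field_simp
    rw [expand2, hUeq, hVeq]
    ring

lemma swap_forward (m n : ℕ) (hm : 1 ≤ m) (hmn : m ≤ n) (f : ℕ → ℝ) :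
    ∑ j ∈ Icc 1 n, ∑ s ∈ Icc j (m - 1), f s = ∑ s ∈ Icc 1 (m - 1), (s : ℝ) * f s := by
  rw [Finset.sum_comm' (t' := Icc 1 (m - 1)) (s' := fun s => Icc 1 s)
    (fun j s => by simp only [Finset.mem_Icc]; omega)]
  refine Finset.sum_congr rfl fun s hs => ?_
  rw [Finset.sum_const, Nat.card_Icc]
  have : s + 1 - 1 = s := by omega
  rw [this, nsmul_eq_mul]

lemma swap_backward (m n : ℕ) (hm : 1 ≤ m) (hmn : m ≤ n) (f : ℕ → ℝ) :
    ∑ j ∈ Icc 1 n, ∑ s ∈ Icc (n - j + 1) (m - 1), f s = ∑ s ∈ Icc 1 (m - 1), (s : ℝ) * f s := by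
  rw [Finset.sum_comm' (t' := Icc 1 (m - 1)) (s' := fun s => Icc (n - s + 1) n)
    (fun j s => by simp only [Finset.mem_Icc]; omega)]
  refine Finset.sum_congr rfl fun s hs => ?_
  rw [Finset.sum_const, Nat.card_Icc]
  have hs' : 1 ≤ s ∧ s ≤ m - 1 := by simpa [Finset.mem_Icc] using hs
  have : n + 1 - (n - s + 1) = s := by omega
  rw [this, nsmul_eq_mul]

lemma W_Icc (k n : ℕ) :
    ∑ s ∈ Icc 1 k, (s : ℝ) * T (k + 1) n s
      = ∑ s ∈ range (k + 1), (s : ℝ) * T (k + 1) n s := by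
  have h1 : range (k + 1) = Icc 0 k := by
    ext x; simp [Finset.mem_Icc, Nat.lt_succ_iff]
  have h2 : Icc 0 k = insert 0 (Icc 1 k) := by
    ext x; simp only [Finset.mem_Icc, Finset.mem_insert]; omega
  rw [h1, h2, Finset.sum_insert (by simp)]
  simp

end TVAux

open TVAux Finset in
/-- Upper bound on the total variation distance: for `1 ≤ m ≤ n` and `p ∈ [0,1]`,
`‖Q_{m,n,p} − Uni_n‖_TV ≤ (m−1)/((n+1)(n−m+1))`. -/
theorem tv_upper_bound (m n : ℕ) (hm : 1 ≤ m) (hmn : m ≤ n)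
    (p : ℝ) (hp0 : 0 ≤ p) (hp1 : p ≤ 1) :
    tvUni m n p ≤ ((m : ℝ) - 1) / (((n : ℝ) + 1) * ((n : ℝ) - m + 1)) := by
  obtain ⟨k, rfl⟩ : ∃ k, m = k + 1 := ⟨m - 1, by omega⟩
  have hkn : k < n := by omega
  have hn1 : 1 ≤ n := by omega
  have hNk : (0 : ℝ) < (n : ℝ) - k := by
    have : (k : ℝ) < n := by exact_mod_cast hkn
    linarith
  have hN : (0 : ℝ) < (n : ℝ) := by exact_mod_cast hn1
  have hN1 : (0 : ℝ) < (n : ℝ) + 1 := by linarith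
  have hpowpos : (0 : ℝ) < ((n : ℝ) + 1) ^ k := by positivity
  set c : ℝ := (k : ℝ) / ((n : ℝ) * ((n : ℝ) + 1) * ((n : ℝ) - k)) with hc
  have hc0 : 0 ≤ c := by
    rw [hc]; positivity
  -- E j
  set E : ℕ → ℝ := fun j =>
    (p * ∑ s ∈ Icc (n - j + 1) k, T (k + 1) n s
      + (1 - p) * ∑ s ∈ Icc j k, T (k + 1) n s) / ((n : ℝ) + 1) ^ k with hE
  have hQ : ∀ j, Q (k + 1) n p j - 1 / (n : ℝ) = c - E j := by
    intro j
    have hm1 : (k + 1 : ℕ) - 1 = k := by omega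
    have hEj : E j = (p * ∑ s ∈ Icc (n - j + 1) k, T (k + 1) n s
        + (1 - p) * ∑ s ∈ Icc j k, T (k + 1) n s) / ((n : ℝ) + 1) ^ k := rfl
    rw [Q, hm1, hEj, hc]
    have hcast : ((k + 1 : ℕ) : ℝ) = (k : ℝ) + 1 := by push_cast; ring
    rw [hcast]
    have hconst : ((n : ℝ) - ((k : ℝ) + 1) + 2) / (((n : ℝ) - ((k : ℝ) + 1) + 1) * ((n : ℝ) + 1))
        - 1 / (n : ℝ) = (k : ℝ) / ((n : ℝ) * ((n : ℝ) + 1) * ((n : ℝ) - k)) := by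
      rw [show (n : ℝ) - ((k : ℝ) + 1) + 1 = (n : ℝ) - k by ring]
      field_simp
      ring
    linear_combination hconst
  have hE0 : ∀ j ∈ Icc 1 n, 0 ≤ E j := by
    intro j hj
    have hT1 : ∀ s ∈ Icc (n - j + 1) k, 0 ≤ T (k + 1) n s := fun s hs =>
      T_nonneg k n s (by have := (Finset.mem_Icc.mp hs).2; omega)
    have hT2 : ∀ s ∈ Icc j k, 0 ≤ T (k + 1) n s := fun s hs =>
      T_nonneg k n s (by have := (Finset.mem_Icc.mp hs).2; omega)
    have h1 : 0 ≤ ∑ s ∈ Icc (n - j + 1) k, T (k + 1) n s := Finset.sum_nonneg hT1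
    have h2 : 0 ≤ ∑ s ∈ Icc j k, T (k + 1) n s := Finset.sum_nonneg hT2
    have m1 := mul_nonneg hp0 h1
    have m2 := mul_nonneg (by linarith : (0 : ℝ) ≤ 1 - p) h2
    have : E j = (p * ∑ s ∈ Icc (n - j + 1) k, T (k + 1) n s
        + (1 - p) * ∑ s ∈ Icc j k, T (k + 1) n s) / ((n : ℝ) + 1) ^ k := rfl
    rw [this]
    apply div_nonneg _ (le_of_lt hpowpos)
    linarith
  have habs : ∀ j ∈ Icc 1 n, |Q (k + 1) n p j - 1 / (n : ℝ)| ≤ c + E j := by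
    intro j hj
    rw [hQ j, abs_sub_le_iff]
    have := hE0 j hj
    constructor <;> linarith
  have hsumE : ∑ j ∈ Icc 1 n, E j = (n : ℝ) * c := by
    have hEdef : ∑ j ∈ Icc 1 n, E j
        = (p * ∑ j ∈ Icc 1 n, ∑ s ∈ Icc (n - j + 1) k, T (k + 1) n s
            + (1 - p) * ∑ j ∈ Icc 1 n, ∑ s ∈ Icc j k, T (k + 1) n s) / ((n : ℝ) + 1) ^ k := by
      rw [Finset.mul_sum, Finset.mul_sum, ← Finset.sum_add_distrib, ← Finset.sum_div]
    have hswf := swap_forward (k + 1) n (by omega) hmn (T (k + 1) n)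
    have hswb := swap_backward (k + 1) n (by omega) hmn (T (k + 1) n)
    rw [show (k + 1 : ℕ) - 1 = k from by omega] at hswf hswb
    rw [hEdef, hswf, hswb]
    have hWval : ∑ s ∈ Icc 1 k, (s : ℝ) * T (k + 1) n s
        = (k : ℝ) * ((n : ℝ) + 1) ^ k / (((n : ℝ) - k) * ((n : ℝ) + 1)) := by
      rw [W_Icc]
      rw [eq_div_iff (by positivity)]
      exact W_mul k n hkn
    rw [hWval, hc]
    have hne : ((n : ℝ) + 1) ^ k ≠ 0 := ne_of_gt hpowpos
    field_simp
    ring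
  have hsum_const : ∑ _j ∈ Icc 1 n, c = (n : ℝ) * c := by
    rw [Finset.sum_const, Nat.card_Icc, show n + 1 - 1 = n from by omega, nsmul_eq_mul]
  have hfinal : ∑ j ∈ Icc 1 n, |Q (k + 1) n p j - 1 / (n : ℝ)|
      ≤ (n : ℝ) * c + (n : ℝ) * c := by
    calc ∑ j ∈ Icc 1 n, |Q (k + 1) n p j - 1 / (n : ℝ)|
        ≤ ∑ j ∈ Icc 1 n, (c + E j) := Finset.sum_le_sum habs
      _ = (∑ _j ∈ Icc 1 n, c) + ∑ j ∈ Icc 1 n, E j := Finset.sum_add_distrib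
      _ = (n : ℝ) * c + (n : ℝ) * c := by rw [hsum_const, hsumE]
  rw [tvUni]
  have hrhs : ((n : ℝ) * c) ≤ (((k + 1 : ℕ) : ℝ) - 1) / (((n : ℝ) + 1) * ((n : ℝ) - ((k + 1 : ℕ) : ℝ) + 1)) := by
    rw [hc]
    push_cast
    rw [show (n : ℝ) - ((k : ℝ) + 1) + 1 = (n : ℝ) - k by ring]
    rw [show ((k : ℝ) + 1) - 1 = (k : ℝ) by ring]
    apply le_of_eq
    field_simp
  calc 1 / 2 * ∑ j ∈ Icc 1 n, |Q (k + 1) n p j - 1 / (n : ℝ)|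
      ≤ 1 / 2 * ((n : ℝ) * c + (n : ℝ) * c) := by linarith [hfinal]
    _ = (n : ℝ) * c := by ring
    _ ≤ _ := hrhs
end

section
/- Lower bounds on the total variation distance: for all integers 1 ≤ m ≤ n and every real p ∈ [0,1], ‖Q_{m,n,p} − Uni_n‖_TV ≥ (|2p−1|/(4n))·| 1 − ((m-1)!/(n+1)^{m-1})·Σ_{s=0}^{m-1} (n+1)^{s}/s! |; moreover, for p = 1/2, ‖Q_{m,n,1/2} − Uni_n‖_TV ≥ (1/2)·| n^{m-2}/(2(n+1)^{m-1}) − (1/(2(n+1)))·( 1 + (n−2m+2)/(n(n−m+1)) ) |. -/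
open Finset

noncomputable def Aab (N : ℕ) (x y : ℝ) : ℝ :=
  ∑ s ∈ range (N+1), (N.choose s : ℝ) * (x + s) ^ ((s:ℤ) - 1) * (y - s) ^ (N - s)

noncomputable def Bab (N : ℕ) (x y : ℝ) : ℝ :=
  ∑ s ∈ range (N+1), (N.choose s : ℝ) * (x + s) ^ (s:ℕ) * (y - s) ^ (N - s)

lemma expshift (a : ℝ) (t : ℕ) : a ^ (((t+1:ℕ):ℤ) - 1) = a ^ (t:ℕ) := by
  rw [show ((t+1:ℕ):ℤ) - 1 = (t:ℤ) by push_cast; ring, zpow_natCast]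

lemma zpow_mul_self (a : ℝ) (ha : a ≠ 0) (t : ℕ) : a ^ ((t:ℤ) - 1) * a = a ^ (t:ℕ) := by
  rw [zpow_sub_one₀ ha, zpow_natCast]
  field_simp

lemma recA (N : ℕ) (x y : ℝ) (hx : 0 < x) :
    Aab (N+1) x y = (x+y) * Aab N x y - Bab N x y + Bab N (x+1) (y-1) := by
  have hxs : ∀ s : ℕ, x + (s:ℝ) ≠ 0 := fun s => by positivity
  set F : ℕ → ℝ := fun s => (N.choose s : ℝ) * (x + s) ^ ((s:ℤ) - 1) * (y - s) ^ (N + 1 - s)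
    with hF
  have hFsum : ∑ s ∈ range (N+2), F s = (x+y) * Aab N x y - Bab N x y := by
    rw [Finset.sum_range_succ]
    have htop : F (N+1) = 0 := by simp [hF]
    rw [htop, add_zero, Aab, Bab, Finset.mul_sum, ← Finset.sum_sub_distrib]
    apply Finset.sum_congr rfl
    intro s hs
    have hsN : s ≤ N := Nat.lt_succ_iff.mp (mem_range.mp hs)
    have h1 : N + 1 - s = (N - s) + 1 := by omega
    rw [hF]
    simp only []
    rw [h1, pow_succ]
    have h2 : (x + (s:ℝ)) ^ ((s:ℤ)-1) * (x + s) = (x+s)^(s:ℕ) := zpow_mul_self _ (hxs s) s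
    calc (N.choose s : ℝ) * (x + s) ^ ((s:ℤ) - 1) * ((y - s) ^ (N - s) * (y - s))
        = (x+y) * ((N.choose s : ℝ) * (x + s) ^ ((s:ℤ) - 1) * (y - s) ^ (N - s))
          - (N.choose s : ℝ) * ((x + (s:ℝ)) ^ ((s:ℤ)-1) * (x + s)) * (y - s) ^ (N - s) := by
          ring
      _ = _ := by rw [h2]
  have hPeel : Aab (N+1) x y
      = (∑ t ∈ range (N+1), ((N+1).choose (t+1) : ℝ) * (x+((t+1:ℕ):ℝ)) ^ (((t+1:ℕ):ℤ)-1)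
          * (y-((t+1:ℕ):ℝ)) ^ (N+1-(t+1))) + F 0 := by
    rw [Aab, Finset.sum_range_succ']
    congr 1
    simp [hF]
  have hSplit : (∑ t ∈ range (N+1), ((N+1).choose (t+1) : ℝ) * (x+((t+1:ℕ):ℝ)) ^ (((t+1:ℕ):ℤ)-1)
          * (y-((t+1:ℕ):ℝ)) ^ (N+1-(t+1)))
      = Bab N (x+1) (y-1) + ∑ t ∈ range (N+1), F (t+1) := by
    rw [Bab, ← Finset.sum_add_distrib]
    apply Finset.sum_congr rfl
    intro t ht
    have hc : ((N+1).choose (t+1) : ℝ) = (N.choose t : ℝ) + (N.choose (t+1) : ℝ) := by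
      rw [Nat.choose_succ_succ']; push_cast; ring
    rw [hc, expshift, hF]
    simp only []
    rw [expshift]
    have he : N + 1 - (t+1) = N - t := by omega
    rw [he]
    have hb1 : x + ((t+1:ℕ):ℝ) = (x+1) + t := by push_cast; ring
    have hb2 : y - ((t+1:ℕ):ℝ) = (y-1) - t := by push_cast; ring
    rw [hb1, hb2]
    ring
  have h4 : ∑ t ∈ range (N+1), F (t+1) + F 0 = (x+y) * Aab N x y - Bab N x y :=
    (Finset.sum_range_succ' F (N+1)).symm.trans hFsum
  rw [hPeel, hSplit]
  linarith [h4]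

lemma recB (N : ℕ) (x y : ℝ) (hx : 0 < x) :
    Bab (N+1) x y = x * Aab (N+1) x y + ((N:ℝ)+1) * Bab N (x+1) (y-1) := by
  have hxs : ∀ s : ℕ, x + (s:ℝ) ≠ 0 := fun s => by positivity
  have step1 : Bab (N+1) x y = x * Aab (N+1) x y
      + ∑ s ∈ range (N+2), (s:ℝ) * ((N+1).choose s : ℝ) * (x+s) ^ ((s:ℤ)-1) * (y-s) ^ (N+1-s) := by
    rw [Bab, Aab, Finset.mul_sum, ← Finset.sum_add_distrib]
    apply Finset.sum_congr rfl
    intro s hs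
    have h2 : (x + (s:ℝ))^(s:ℕ) = (x + s) * ((x+s) ^ ((s:ℤ)-1)) := by
      rw [← zpow_mul_self _ (hxs s) s]; ring
    rw [h2]; ring
  have step2 : ∑ s ∈ range (N+2), (s:ℝ) * ((N+1).choose s : ℝ) * (x+s) ^ ((s:ℤ)-1) * (y-s) ^ (N+1-s)
      = ((N:ℝ)+1) * Bab N (x+1) (y-1) := by
    rw [Finset.sum_range_succ', Bab, Finset.mul_sum]
    simp only [Nat.cast_zero, zero_mul, add_zero]
    apply Finset.sum_congr rfl
    intro t ht
    have hc : ((t:ℝ)+1) * ((N+1).choose (t+1) : ℝ) = ((N:ℝ)+1) * (N.choose t : ℝ) := by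
      have := Nat.add_one_mul_choose_eq N t
      have : ((N+1) * N.choose t : ℕ) = ((N+1).choose (t+1) * (t+1) : ℕ) := this
      have h3 : ((N:ℝ)+1) * (N.choose t : ℝ) = ((N+1).choose (t+1) : ℝ) * ((t:ℝ)+1) := by
        exact_mod_cast congrArg (Nat.cast : ℕ → ℝ) this
      rw [h3]; ring
    rw [expshift]
    have he : N + 1 - (t+1) = N - t := by omega
    rw [he]
    have hb1 : x + ((t+1:ℕ):ℝ) = (x+1) + t := by push_cast; ring
    have hb2 : y - ((t+1:ℕ):ℝ) = (y-1) - t := by push_cast; ring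
    rw [hb1, hb2]
    push_cast
    calc ((t:ℝ)+1) * ((N+1).choose (t+1) : ℝ) * ((x+1) + t) ^ (t:ℕ) * ((y-1) - t) ^ (N-t)
        = (((t:ℝ)+1) * ((N+1).choose (t+1) : ℝ)) * (((x+1) + t) ^ (t:ℕ) * ((y-1) - t) ^ (N-t)) := by ring
      _ = _ := by rw [hc]; ring
  rw [step1, step2]

lemma abelAB (N : ℕ) : ∀ x y : ℝ, 0 < x →
    Aab N x y = (x+y)^N / x ∧
    Bab N x y = (N.factorial : ℝ) * ∑ i ∈ range (N+1), (x+y)^i / (i.factorial : ℝ) := by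
  induction N with
  | zero =>
    intro x y hx
    constructor
    · have h0 : Aab 0 x y = x⁻¹ := by norm_num [Aab]
      rw [h0, pow_zero, one_div]
    · simp [Bab]
  | succ N IH =>
    intro x y hx
    have hx1 : (0:ℝ) < x + 1 := by linarith
    have hA := (IH x y hx).1
    have hB := (IH x y hx).2
    have hA' := (IH (x+1) (y-1) hx1).1
    have hB' := (IH (x+1) (y-1) hx1).2
    have hz : (x+1) + (y-1) = x + y := by ring
    rw [hz] at hA' hB'
    have hAN : Aab (N+1) x y = (x+y)^(N+1) / x := by
      rw [recA N x y hx, hA, hB, hB']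
      field_simp
      ring
    refine ⟨hAN, ?_⟩
    have hsum : ∑ i ∈ range (N+1+1), (x+y)^i/(i.factorial:ℝ)
        = (∑ i ∈ range (N+1), (x+y)^i/(i.factorial:ℝ)) + (x+y)^(N+1)/((N+1).factorial:ℝ) :=
      Finset.sum_range_succ _ _
    have hfac : ((N+1).factorial : ℝ) = ((N:ℝ)+1) * (N.factorial : ℝ) := by
      rw [Nat.factorial_succ]; push_cast; ring
    have hfacne : (N.factorial : ℝ) ≠ 0 := by positivity
    rw [recB N x y hx, hAN, hB', hsum, hfac]
    field_simp
    ring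

lemma zpow_pred_mul (b : ℝ) (hb : b ≠ 0) (N s : ℕ) (h : s ≤ N) :
    b ^ ((N:ℤ) - s - 1) * b = b ^ (N - s : ℕ) := by
  rw [show ((N:ℤ) - s - 1) = ((N:ℤ) - s) - 1 by ring, zpow_sub_one₀ hb,
    show ((N:ℤ) - s) = ((N - s : ℕ):ℤ) by omega, zpow_natCast]
  field_simp

lemma abelD (N : ℕ) (x y : ℝ) (hx : 0 < x) (hy : 0 < y) :
    ∑ s ∈ range (N+1), (N.choose s : ℝ) * (x + s) ^ ((s:ℤ)-1) * (y + N - s) ^ ((N:ℤ) - s - 1)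
      = (1/x + 1/y) * (x + y + N) ^ ((N:ℤ)-1) := by
  have hz : (0:ℝ) < x + y + N := by positivity
  have key : (x + y + (N:ℝ)) *
      (∑ s ∈ range (N+1), (N.choose s : ℝ) * (x + s) ^ ((s:ℤ)-1) * (y + N - s) ^ ((N:ℤ) - s - 1))
      = Aab N y (x + N) + Aab N x (y + N) := by
    rw [Finset.mul_sum]
    have split : ∀ s ∈ range (N+1),
        (x + y + (N:ℝ)) * ((N.choose s : ℝ) * (x + s) ^ ((s:ℤ)-1) * (y + N - s) ^ ((N:ℤ) - s - 1))
        = (N.choose s : ℝ) * (x + s) ^ (s:ℕ) * (y + N - s) ^ ((N:ℤ) - s - 1)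
          + (N.choose s : ℝ) * (x + s) ^ ((s:ℤ)-1) * (y + N - s) ^ (N - s : ℕ) := by
      intro s hs
      have hsN : s ≤ N := Nat.lt_succ_iff.mp (mem_range.mp hs)
      have hbpos : (0:ℝ) < y + N - s := by
        have : (s:ℝ) ≤ N := by exact_mod_cast hsN
        linarith
      have h1 : (x + (s:ℝ)) ^ ((s:ℤ)-1) * (x + s) = (x + s)^(s:ℕ) :=
        zpow_mul_self _ (by positivity) s
      have h2 : (y + (N:ℝ) - s) ^ ((N:ℤ) - s - 1) * (y + N - s) = (y + N - s) ^ (N - s : ℕ) :=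
        zpow_pred_mul _ hbpos.ne' N s hsN
      calc (x + y + (N:ℝ)) * ((N.choose s : ℝ) * (x + s) ^ ((s:ℤ)-1) * (y + N - s) ^ ((N:ℤ) - s - 1))
          = (N.choose s : ℝ) * ((x + (s:ℝ)) ^ ((s:ℤ)-1) * (x + s)) * (y + N - s) ^ ((N:ℤ) - s - 1)
            + (N.choose s : ℝ) * (x + s) ^ ((s:ℤ)-1) *
              ((y + (N:ℝ) - s) ^ ((N:ℤ) - s - 1) * (y + N - s)) := by ring
        _ = _ := by rw [h1, h2]
    rw [Finset.sum_congr rfl split, Finset.sum_add_distrib]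
    congr 1
    · rw [Aab, ← Finset.sum_range_reflect]
      apply Finset.sum_congr rfl
      intro t ht
      have htN : t ≤ N := Nat.lt_succ_iff.mp (mem_range.mp ht)
      have e0 : N + 1 - 1 - t = N - t := by omega
      rw [e0, Nat.choose_symm htN]
      have e1 : ((N - t : ℕ):ℝ) = (N:ℝ) - t := by
        push_cast [Nat.cast_sub htN]; ring
      have e2 : ((N - t : ℕ):ℤ) = (N:ℤ) - t := by omega
      rw [e1]
      rw [show ((N:ℤ) - ((N - t:ℕ)) - 1 : ℤ) = (t:ℤ) - 1 by omega]
      rw [show (y + (N:ℝ) - ((N:ℝ) - t)) = y + t by ring]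
      rw [show (x + ((N:ℝ) - t)) = (x + N) - t by ring]
      ring
  have hA1 := (abelAB N y (x+N) hy).1
  have hA2 := (abelAB N x (y+N) hx).1
  apply mul_left_cancel₀ hz.ne'
  rw [key, hA1, hA2]
  rw [show (y + (x + (N:ℝ))) = x + y + N by ring, show (x + (y + (N:ℝ))) = x + y + N by ring]
  rw [show ((N:ℤ) - 1) = (N:ℤ) - 1 by rfl, zpow_sub_one₀ hz.ne', zpow_natCast]
  field_simp
  ring

lemma sum_T (M n : ℕ) (h : M + 1 ≤ n) :
    ∑ s ∈ Finset.Icc 0 M, T (M+1) n s = (1 + 1/((n:ℝ) - M)) * ((n:ℝ)+1) ^ ((M:ℤ)-1) := by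
  have hIcc : Finset.Icc 0 M = range (M+1) := by ext x; simp [Nat.lt_succ_iff]
  have hnM : (0:ℝ) < (n:ℝ) - M := by
    have : (M:ℝ) + 1 ≤ n := by exact_mod_cast h
    linarith
  have hD := abelD M 1 ((n:ℝ) - M) one_pos hnM
  rw [hIcc]
  have hterm : ∀ s ∈ range (M+1), T (M+1) n s
      = (M.choose s : ℝ) * (1 + (s:ℝ)) ^ ((s:ℤ)-1) * (((n:ℝ) - M) + M - s) ^ ((M:ℤ) - s - 1) := by
    intro s _
    rw [T]
    simp only [Nat.add_sub_cancel]
    rw [show (((M+1:ℕ)):ℤ) - s - 2 = (M:ℤ) - s - 1 by push_cast; ring]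
    rw [show (((n:ℝ) - M) + M - s) = (n:ℝ) - s by ring]
    rw [show (1 + (s:ℝ)) = (s:ℝ) + 1 by ring]
    ring
  rw [Finset.sum_congr rfl hterm, hD]
  rw [show (1 + ((n:ℝ) - M) + M) = (n:ℝ) + 1 by ring]
  norm_num

lemma sum_sT (M n : ℕ) (h : M + 1 ≤ n) :
    ∑ s ∈ Finset.Icc 0 M, (s:ℝ) * ((n:ℝ) - s) * T (M+1) n s
      = (M.factorial : ℝ) * (∑ i ∈ range (M+1), ((n:ℝ)+1)^i / (i.factorial:ℝ)) - ((n:ℝ)+1)^M := by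
  have hIcc : Finset.Icc 0 M = range (M+1) := by ext x; simp [Nat.lt_succ_iff]
  have hA := (abelAB M 1 (n:ℝ) one_pos).1
  have hB := (abelAB M 1 (n:ℝ) one_pos).2
  have hterm : ∀ s ∈ range (M+1), (s:ℝ) * ((n:ℝ) - s) * T (M+1) n s
      = (M.choose s : ℝ) * (1 + (s:ℝ)) ^ (s:ℕ) * ((n:ℝ) - s) ^ (M - s : ℕ)
        - (M.choose s : ℝ) * (1 + (s:ℝ)) ^ ((s:ℤ)-1) * ((n:ℝ) - s) ^ (M - s : ℕ) := by
    intro s hs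
    have hsM : s ≤ M := Nat.lt_succ_iff.mp (mem_range.mp hs)
    have hns : (0:ℝ) < (n:ℝ) - s := by
      have h1 : (s:ℝ) ≤ M := by exact_mod_cast hsM
      have h2 : (M:ℝ) + 1 ≤ n := by exact_mod_cast h
      linarith
    rw [T]
    simp only [Nat.add_sub_cancel]
    rw [show (((M+1:ℕ)):ℤ) - s - 2 = (M:ℤ) - s - 1 by push_cast; ring]
    rw [show (1 + (s:ℝ)) = (s:ℝ) + 1 by ring]
    have e1 : ((n:ℝ) - s) ^ ((M:ℤ) - s - 1) * ((n:ℝ) - s) = ((n:ℝ) - s) ^ (M - s : ℕ) :=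
      zpow_pred_mul _ hns.ne' M s hsM
    have e2 : ((s:ℝ)+1) ^ ((s:ℤ)-1) * ((s:ℝ)+1) = ((s:ℝ)+1) ^ (s:ℕ) :=
      zpow_mul_self _ (by positivity) s
    calc (s:ℝ) * ((n:ℝ) - s) * ((M.choose s : ℝ) * ((n:ℝ) - s) ^ ((M:ℤ) - s - 1) * ((s:ℝ)+1) ^ ((s:ℤ)-1))
        = (M.choose s : ℝ) * (((s:ℝ)+1) ^ ((s:ℤ)-1) * ((s:ℝ)+1)) * (((n:ℝ) - s) ^ ((M:ℤ) - s - 1) * ((n:ℝ) - s))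
          - (M.choose s : ℝ) * ((s:ℝ)+1) ^ ((s:ℤ)-1) * (((n:ℝ) - s) ^ ((M:ℤ) - s - 1) * ((n:ℝ) - s)) := by
          ring
      _ = _ := by rw [e1, e2]
  rw [hIcc, Finset.sum_congr rfl hterm, Finset.sum_sub_distrib]
  have hBs : ∑ s ∈ range (M+1), (M.choose s : ℝ) * (1 + (s:ℝ)) ^ (s:ℕ) * ((n:ℝ) - s) ^ (M - s : ℕ)
      = Bab M 1 (n:ℝ) := rfl
  have hAs : ∑ s ∈ range (M+1), (M.choose s : ℝ) * (1 + (s:ℝ)) ^ ((s:ℤ)-1) * ((n:ℝ) - s) ^ (M - s : ℕ)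
      = Aab M 1 (n:ℝ) := rfl
  rw [hBs, hAs, hA, hB]
  rw [show ((1:ℝ) + n) = (n:ℝ) + 1 by ring]
  norm_num

lemma gaussIoc (n k : ℕ) : ∑ j ∈ Finset.Ioc 0 k, ((n:ℝ) + 1 - 2*j) = (k:ℝ) * ((n:ℝ) - k) := by
  induction k with
  | zero => simp
  | succ k ih =>
    rw [Finset.sum_Ioc_succ_top (Nat.zero_le _), ih]
    push_cast
    ring

lemma swapA (M n : ℕ) (f : ℕ → ℝ) (h : M + 1 ≤ n) :
    ∑ j ∈ Finset.Icc 1 n, (((n:ℝ) + 1 - 2*j) * ∑ s ∈ Finset.Icc (n - j + 1) M, f s)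
      = ∑ s ∈ Finset.Icc 0 M, (-(s:ℝ) * ((n:ℝ) - s)) * f s := by
  have hms : ∀ j ∈ Finset.Icc 1 n, ((n:ℝ)+1-2*j) * ∑ s ∈ Finset.Icc (n-j+1) M, f s
      = ∑ s ∈ Finset.Icc (n-j+1) M, ((n:ℝ)+1-2*j) * f s := fun j _ => Finset.mul_sum _ _ _
  rw [Finset.sum_congr rfl hms]
  rw [Finset.sum_comm' (t' := Finset.Icc 0 M) (s' := fun s => Finset.Icc (n-s+1) n)
    (by intro j s; simp only [Finset.mem_Icc]; omega)]
  apply Finset.sum_congr rfl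
  intro s hs
  rw [← Finset.sum_mul]
  have hsM : s ≤ M := (Finset.mem_Icc.mp hs).2
  have hsn : s ≤ n := by omega
  rw [Finset.Icc_add_one_left_eq_Ioc]
  have hcons := Finset.sum_Ioc_consecutive (fun j => ((n:ℝ)+1-2*j)) (Nat.zero_le (n-s)) (Nat.sub_le n s)
  have g1 := gaussIoc n (n-s)
  have g2 := gaussIoc n n
  have hc : ((n - s:ℕ):ℝ) = (n:ℝ) - s := by
    push_cast [Nat.cast_sub hsn]; ring
  have e : ∑ j ∈ Finset.Ioc (n-s) n, ((n:ℝ)+1-2*j)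
      = (n:ℝ)*((n:ℝ)-(n:ℝ)) - ((n-s:ℕ):ℝ)*((n:ℝ)-((n-s:ℕ):ℝ)) := by
    rw [← g2, ← g1]; linarith [hcons]
  rw [e, hc]
  ring

lemma swapB (M n : ℕ) (f : ℕ → ℝ) (h : M + 1 ≤ n) :
    ∑ j ∈ Finset.Icc 1 n, (((n:ℝ) + 1 - 2*j) * ∑ s ∈ Finset.Icc j M, f s)
      = ∑ s ∈ Finset.Icc 0 M, ((s:ℝ) * ((n:ℝ) - s)) * f s := by
  have hms : ∀ j ∈ Finset.Icc 1 n, ((n:ℝ)+1-2*j) * ∑ s ∈ Finset.Icc j M, f s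
      = ∑ s ∈ Finset.Icc j M, ((n:ℝ)+1-2*j) * f s := fun j _ => Finset.mul_sum _ _ _
  rw [Finset.sum_congr rfl hms]
  rw [Finset.sum_comm' (t' := Finset.Icc 0 M) (s' := fun s => Finset.Icc 1 s)
    (by intro j s; simp only [Finset.mem_Icc]; omega)]
  apply Finset.sum_congr rfl
  intro s hs
  rw [← Finset.sum_mul]
  rw [show Finset.Icc 1 s = Finset.Ioc 0 s from Finset.Icc_add_one_left_eq_Ioc 0 s, gaussIoc n s]

lemma sumW0 (n : ℕ) : ∑ j ∈ Finset.Icc 1 n, ((n:ℝ) + 1 - 2*j) = 0 := by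
  rw [show Finset.Icc 1 n = Finset.Ioc 0 n from Finset.Icc_add_one_left_eq_Ioc 0 n, gaussIoc n n]
  ring

/-- Lower bounds on the total variation distance: for `1 ≤ m ≤ n` and `p ∈ [0,1]`,
`‖Q_{m,n,p} − Uni_n‖_TV ≥ (|2p−1|/(4n))·|1 − ((m-1)!/(n+1)^(m-1))·Σ_{s=0}^{m-1}(n+1)^s/s!|`;
moreover for `p = 1/2`,
`‖Q_{m,n,1/2} − Uni_n‖_TV ≥ (1/2)·|n^(m-2)/(2(n+1)^(m-1)) − (1/(2(n+1)))(1 + (n−2m+2)/(n(n−m+1)))|`,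
where `n^(m-2)` is interpreted in `ℝ` (`zpow`). -/
theorem tv_lower_bounds (m n : ℕ) (hm : 1 ≤ m) (hmn : m ≤ n) :
    (∀ p : ℝ, 0 ≤ p → p ≤ 1 →
      |2 * p - 1| / (4 * (n : ℝ)) *
          |1 - ((m - 1).factorial : ℝ) / ((n : ℝ) + 1) ^ (m - 1) *
              ∑ s ∈ Finset.range m, ((n : ℝ) + 1) ^ s / (s.factorial : ℝ)|
        ≤ tvUni m n p)
    ∧
    (1 / 2 *
        |(n : ℝ) ^ ((m : ℤ) - 2) / (2 * ((n : ℝ) + 1) ^ (m - 1)) -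
            1 / (2 * ((n : ℝ) + 1)) *
              (1 + ((n : ℝ) - 2 * m + 2) / ((n : ℝ) * ((n : ℝ) - m + 1)))|
      ≤ tvUni m n (1 / 2)) := by
  obtain ⟨M, rfl⟩ : ∃ M, m = M + 1 := ⟨m - 1, by omega⟩
  have hMn : M + 1 ≤ n := hmn
  have hn1 : 1 ≤ n := le_trans hm hmn
  have hn0 : (0:ℝ) < n := by exact_mod_cast hn1
  have hP : (0:ℝ) < ((n:ℝ)+1)^M := by positivity
  have hnM : (0:ℝ) < (n:ℝ) - M := by
    have : (M:ℝ) + 1 ≤ n := by exact_mod_cast hMn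
    linarith
  -- nonneg of T and of X
  have hT : ∀ s ∈ Finset.Icc 0 M, 0 ≤ (s:ℝ) * ((n:ℝ) - s) * T (M+1) n s := by
    intro s hs
    have hsM : s ≤ M := (Finset.mem_Icc.mp hs).2
    have hns : (0:ℝ) < (n:ℝ) - s := by
      have h1 : (s:ℝ) ≤ M := by exact_mod_cast hsM
      linarith
    have hTpos : 0 ≤ T (M+1) n s := by
      rw [T]
      apply mul_nonneg (mul_nonneg (by positivity) (zpow_nonneg hns.le _)) (zpow_nonneg (by positivity) _)
    positivity
  have hX : 0 ≤ ∑ s ∈ Finset.Icc 0 M, (s:ℝ) * ((n:ℝ) - s) * T (M+1) n s :=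
    Finset.sum_nonneg hT
  set X := ∑ s ∈ Finset.Icc 0 M, (s:ℝ) * ((n:ℝ) - s) * T (M+1) n s with hXdef
  constructor
  · intro p hp0 hp1
    -- the weighted sum identity
    have key : ∑ j ∈ Finset.Icc 1 n, (((n:ℝ) + 1 - 2*j) * (Q (M+1) n p j - 1/(n:ℝ)))
        = (2*p - 1) * X / ((n:ℝ)+1)^M := by
      have expand : ∀ j ∈ Finset.Icc 1 n, ((n:ℝ)+1-2*j) * (Q (M+1) n p j - 1/(n:ℝ))
          = (((n:ℝ) - (M+1:ℕ) + 2) / (((n:ℝ) - (M+1:ℕ) + 1) * ((n:ℝ) + 1)) - 1/(n:ℝ)) * ((n:ℝ)+1-2*j)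
            - (1/((n:ℝ)+1)^M * p) * (((n:ℝ)+1-2*j) * ∑ s ∈ Finset.Icc (n-j+1) M, T (M+1) n s)
            - (1/((n:ℝ)+1)^M * (1-p)) * (((n:ℝ)+1-2*j) * ∑ s ∈ Finset.Icc j M, T (M+1) n s) := by
        intro j _
        rw [Q]
        simp only [Nat.add_sub_cancel]
        ring
      rw [Finset.sum_congr rfl expand, Finset.sum_sub_distrib, Finset.sum_sub_distrib,
        ← Finset.mul_sum, ← Finset.mul_sum, ← Finset.mul_sum, sumW0,
        swapA M n _ hMn, swapB M n _ hMn]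
      have hA : ∑ s ∈ Finset.Icc 0 M, (-(s:ℝ) * ((n:ℝ) - s)) * T (M+1) n s = -X := by
        rw [hXdef, ← Finset.sum_neg_distrib]
        apply Finset.sum_congr rfl
        intro s _
        ring
      rw [hA, hXdef]
      field_simp
      ring
    -- bound the weighted sum by the TV sum
    have habs : |(2*p - 1) * X / ((n:ℝ)+1)^M| ≤ (n:ℝ) * ∑ j ∈ Finset.Icc 1 n, |Q (M+1) n p j - 1/(n:ℝ)| := by
      rw [← key]
      calc |∑ j ∈ Finset.Icc 1 n, (((n:ℝ) + 1 - 2*j) * (Q (M+1) n p j - 1/(n:ℝ)))|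
          ≤ ∑ j ∈ Finset.Icc 1 n, |((n:ℝ) + 1 - 2*j) * (Q (M+1) n p j - 1/(n:ℝ))| :=
            Finset.abs_sum_le_sum_abs _ _
        _ ≤ ∑ j ∈ Finset.Icc 1 n, (n:ℝ) * |Q (M+1) n p j - 1/(n:ℝ)| := by
            apply Finset.sum_le_sum
            intro j hj
            rw [abs_mul]
            apply mul_le_mul_of_nonneg_right _ (abs_nonneg _)
            obtain ⟨h1, h2⟩ := Finset.mem_Icc.mp hj
            have h1' : (1:ℝ) ≤ j := by exact_mod_cast h1
            have h2' : (j:ℝ) ≤ n := by exact_mod_cast h2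
            rw [abs_le]
            constructor <;> linarith
        _ = (n:ℝ) * ∑ j ∈ Finset.Icc 1 n, |Q (M+1) n p j - 1/(n:ℝ)| := (Finset.mul_sum _ _ _).symm
    have hbr : |1 - ((M.factorial:ℝ) / ((n:ℝ)+1)^M) * ∑ s ∈ Finset.range (M+1), ((n:ℝ)+1)^s/(s.factorial:ℝ)|
        = X / ((n:ℝ)+1)^M := by
      have hXval : X = (M.factorial : ℝ) * (∑ i ∈ Finset.range (M+1), ((n:ℝ)+1)^i / (i.factorial:ℝ)) - ((n:ℝ)+1)^M :=
        sum_sT M n hMn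
      have : 1 - ((M.factorial:ℝ) / ((n:ℝ)+1)^M) * ∑ s ∈ Finset.range (M+1), ((n:ℝ)+1)^s/(s.factorial:ℝ)
          = -(X / ((n:ℝ)+1)^M) := by
        rw [hXval]
        field_simp
        ring
      rw [this, abs_neg, abs_of_nonneg (div_nonneg hX hP.le)]
    have hkeyabs : |(2*p - 1) * X / ((n:ℝ)+1)^M| = |2*p-1| * (X / ((n:ℝ)+1)^M) := by
      rw [mul_div_assoc, abs_mul, abs_of_nonneg (div_nonneg hX hP.le)]
    have hS0 : 0 ≤ ∑ j ∈ Finset.Icc 1 n, |Q (M+1) n p j - 1/(n:ℝ)| :=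
      Finset.sum_nonneg fun j _ => abs_nonneg _
    rw [tvUni]
    simp only [Nat.add_sub_cancel]
    rw [hbr]
    rw [hkeyabs] at habs
    have h4n : (0:ℝ) < 4 * n := by linarith
    rw [div_mul_eq_mul_div, div_le_iff₀ h4n]
    nlinarith [habs, hS0, abs_nonneg (2*p-1), hn0]
  · -- p = 1/2 case
    have hQn : Q (M+1) n (1/2) n - 1/(n:ℝ)
        = (n:ℝ) ^ ((M:ℤ) - 1) / (2 * ((n:ℝ) + 1) ^ M) -
            1 / (2 * ((n:ℝ) + 1)) *
              (1 + ((n:ℝ) - 2 * ((M:ℝ)+1) + 2) / ((n:ℝ) * ((n:ℝ) - ((M:ℝ)+1) + 1))) := by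
      rw [Q]
      simp only [Nat.add_sub_cancel]
      rw [show n - n + 1 = 1 by omega]
      rw [Finset.Icc_eq_empty (by omega : ¬ n ≤ M), Finset.sum_empty]
      have hsplit : ∑ s ∈ Finset.Icc 0 M, T (M+1) n s = T (M+1) n 0 + ∑ s ∈ Finset.Icc 1 M, T (M+1) n s := by
        have hins : Finset.Icc 0 M = insert 0 (Finset.Icc 1 M) := by
          ext x; simp only [Finset.mem_Icc, Finset.mem_insert]; omega
        rw [hins, Finset.sum_insert (by simp)]
      have hT0 : T (M+1) n 0 = (n:ℝ) ^ ((M:ℤ) - 1) := by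
        rw [T]
        simp only [Nat.add_sub_cancel, Nat.choose_zero_right, Nat.cast_zero, Nat.cast_one]
        rw [show ((M+1:ℕ):ℤ) - (0:ℤ) - 2 = (M:ℤ) - 1 by push_cast; ring]
        norm_num
      have hIcc1 : ∑ s ∈ Finset.Icc 1 M, T (M+1) n s
          = (1 + 1/((n:ℝ) - M)) * ((n:ℝ)+1) ^ ((M:ℤ)-1) - (n:ℝ) ^ ((M:ℤ) - 1) := by
        have := sum_T M n hMn
        rw [hsplit, hT0] at this
        linarith
      rw [hIcc1]
      have hz1 : ((n:ℝ)+1) ^ ((M:ℤ)-1) = ((n:ℝ)+1)^M / ((n:ℝ)+1) := by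
        rw [zpow_sub_one₀ (by positivity) (M:ℤ), zpow_natCast, div_eq_mul_inv]
      rw [hz1]
      have hcast : ((M+1:ℕ):ℝ) = (M:ℝ) + 1 := by push_cast; ring
      rw [hcast]
      have hne1 : (n:ℝ) - ((M:ℝ)+1) + 1 ≠ 0 := by
        rw [show (n:ℝ) - ((M:ℝ)+1) + 1 = (n:ℝ) - M by ring]
        exact hnM.ne'
      field_simp
      ring
    have hsingle : |Q (M+1) n (1/2) n - 1/(n:ℝ)| ≤ ∑ j ∈ Finset.Icc 1 n, |Q (M+1) n (1/2) j - 1/(n:ℝ)| :=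
      Finset.single_le_sum (f := fun j => |Q (M+1) n (1/2) j - 1/(n:ℝ)|)
        (fun i _ => abs_nonneg _) (Finset.mem_Icc.mpr ⟨hn1, le_refl n⟩)
    rw [tvUni]
    simp only [Nat.add_sub_cancel]
    rw [show ((M+1:ℕ):ℤ) - 2 = (M:ℤ) - 1 by push_cast; ring]
    rw [show ((M+1:ℕ):ℝ) = (M:ℝ) + 1 by push_cast; ring]
    rw [← hQn]
    linarith [hsingle]
end
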